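/- arXiv:1908.11467 — 7 statements merged into one kernel-verified Lean document; each statement's English description precedes it below -/
import Mathlib

section
/- Let r, m be natural numbers, a, b1, b2 real numbers, and let q1, q2, p be real polynomials such that q1 and q2 have degree at most r+1, both have coefficient a at X^(r+1), have coefficients b1 and b2 respectively at X^r, and p is monic of degree m. Then the polynomial q1(X)·p(X) − q2(X)·p(X−1) has degree at most r+m, and its coefficient at X^(r+m) equals b1 − b2 + a·m. -/
open Polynomial Finset

lemma comp_coeff_aux (p : Polynomial ℝ) (n : ℕ) (hp : p.Monic) (hdeg : p.natDegree = n + 1) :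
    (p.comp (X - 1)).coeff n = p.coeff n - (n + 1) := by
  have h1 : (X - 1 : Polynomial ℝ) = X + C (-1) := by rw [C_neg, C_1, sub_eq_add_neg]
  rw [comp_eq_sum_left,
    p.sum_over_range' (f := fun e a => C a * (X - 1) ^ e) (by simp) (n + 2) (by omega),
    finset_sum_coeff]
  have hterm : ∀ e, (C (p.coeff e) * (X - 1) ^ e).coeff n
      = p.coeff e * ((-1 : ℝ) ^ (e - n) * (e.choose n : ℝ)) := by
    intro e
    rw [coeff_C_mul, h1, coeff_X_add_C_pow]
  simp only [hterm]
  rw [Finset.sum_range_succ, Finset.sum_range_succ]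
  have hz : ∀ e ∈ Finset.range n, p.coeff e * ((-1 : ℝ) ^ (e - n) * (e.choose n : ℝ)) = 0 := by
    intro e he
    simp only [Finset.mem_range] at he
    rw [Nat.choose_eq_zero_of_lt he]
    simp
  rw [Finset.sum_eq_zero hz]
  have hlead : p.coeff (n + 1) = 1 := by
    have := hp.coeff_natDegree
    rwa [hdeg] at this
  simp [hlead, Nat.choose_succ_self_right]
  ring

/-- Lemma 1 of the paper: if `q1, q2` have degree at most `r+1`, share the same
coefficient `a` at `X^(r+1)`, have coefficients `b1`, `b2` at `X^r`, and `p` is monic of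
degree `m`, then `q1(X)·p(X) − q2(X)·p(X−1)` has degree at most `r+m` with coefficient
`b1 − b2 + a·m` at `X^(r+m)`. -/
theorem stmt_0 (r m : ℕ) (a b1 b2 : ℝ) (q1 q2 p : Polynomial ℝ)
    (hq1deg : q1.degree ≤ (r + 1 : ℕ)) (hq2deg : q2.degree ≤ (r + 1 : ℕ))
    (hq1a : q1.coeff (r + 1) = a) (hq2a : q2.coeff (r + 1) = a)
    (hq1b : q1.coeff r = b1) (hq2b : q2.coeff r = b2)
    (hp : p.Monic) (hpdeg : p.natDegree = m) :
    (q1 * p - q2 * (p.comp (X - 1))).degree ≤ (r + m : ℕ) ∧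
    (q1 * p - q2 * (p.comp (X - 1))).coeff (r + m) = b1 - b2 + a * m := by
  have h1 : (X - 1 : Polynomial ℝ) = X - C 1 := by simp
  have hcomp_monic : (p.comp (X - 1)).Monic := by rw [h1]; exact hp.comp_X_sub_C 1
  have hcomp_deg : (p.comp (X - 1)).natDegree = m := by
    rw [natDegree_comp, h1, natDegree_X_sub_C, hpdeg, mul_one]
  set d : Polynomial ℝ := p - p.comp (X - 1) with hd
  have hpdeg' : p.degree = (m : ℕ) := by
    rw [degree_eq_natDegree hp.ne_zero, hpdeg]
  have hdd : d.degree < (m : ℕ) := by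
    rw [← hpdeg']
    refine degree_sub_lt ?_ hp.ne_zero ?_
    · rw [degree_eq_natDegree hp.ne_zero, degree_eq_natDegree hcomp_monic.ne_zero,
        hpdeg, hcomp_deg]
    · rw [hp.leadingCoeff, hcomp_monic.leadingCoeff]
  have hddn : d.natDegree ≤ m - 1 := by
    rcases eq_or_ne d 0 with h | h
    · simp [h]
    · have := (degree_eq_natDegree h) ▸ hdd
      exact_mod_cast Nat.le_sub_one_of_lt (by exact_mod_cast this)
  have key : q1 * p - q2 * (p.comp (X - 1)) = (q1 - q2) * p + q2 * d := by
    rw [hd]; ring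
  have hq12 : (q1 - q2).degree ≤ (r : ℕ) := by
    rw [degree_le_iff_coeff_zero]
    intro k hk
    have hk' : r < k := by exact_mod_cast hk
    rcases eq_or_lt_of_le (Nat.succ_le_of_lt hk') with h | h
    · rw [coeff_sub, ← h, hq1a, hq2a, sub_self]
    · rw [coeff_sub, coeff_eq_zero_of_degree_lt (lt_of_le_of_lt hq1deg (by exact_mod_cast h)),
        coeff_eq_zero_of_degree_lt (lt_of_le_of_lt hq2deg (by exact_mod_cast h)), sub_self]
  have hq12n : (q1 - q2).natDegree ≤ r := natDegree_le_iff_degree_le.mpr hq12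
  have hq2n : q2.natDegree ≤ r + 1 := natDegree_le_iff_degree_le.mpr hq2deg
  have hpm : p.coeff m = 1 := by rw [← hpdeg]; exact hp.coeff_natDegree
  have hA : ((q1 - q2) * p).coeff (r + m) = b1 - b2 := by
    rw [coeff_mul_add_eq_of_natDegree_le hq12n hpdeg.le, coeff_sub, hq1b, hq2b, hpm, mul_one]
  have hB : (q2 * d).coeff (r + m) = a * m := by
    rcases Nat.eq_zero_or_pos m with hm | hm
    · have hd0 : d = 0 := by
        subst hm
        have : d.degree < 0 := by exact_mod_cast hdd
        exact degree_eq_bot.mp (by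
          rcases eq_or_ne d 0 with h | h
          · simp [h]
          · exact absurd this (by
              rw [degree_eq_natDegree h]
              exact not_lt.mpr (by exact_mod_cast Nat.zero_le _)))
      simp [hd0, hm]
    · obtain ⟨n, rfl⟩ := Nat.exists_eq_add_of_le hm  -- m = 1 + n
      have hdc : d.coeff n = (n + 1 : ℝ) := by
        have := comp_coeff_aux p n hp (by omega)
        have hpc : p.coeff n = p.coeff n := rfl
        rw [hd, coeff_sub, this]
        ring
      have heq : r + (1 + n) = (r + 1) + n := by omega
      rw [heq, coeff_mul_add_eq_of_natDegree_le hq2n (by omega : d.natDegree ≤ n), hq2a, hdc]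
      push_cast
      ring
  rw [key]
  constructor
  · refine le_trans (degree_add_le _ _) (max_le ?_ ?_)
    · refine le_trans (degree_mul_le _ _) ?_
      rw [hpdeg']
      calc (q1 - q2).degree + (m : ℕ) ≤ (r : ℕ) + (m : ℕ) := by
            exact add_le_add_left hq12 _
        _ = ((r + m : ℕ) : WithBot ℕ) := by push_cast; rfl
    · rcases eq_or_ne d 0 with h | h
      · simp [h]
      · have hm : 1 ≤ m := by
          by_contra hc
          have hm0 : m = 0 := by omega
          rw [hm0] at hdd
          have : (0 : WithBot ℕ) ≤ d.degree := by
            rw [degree_eq_natDegree h]; exact_mod_cast Nat.zero_le _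
          exact absurd hdd (not_lt.mpr (by exact_mod_cast this))
        refine le_trans (degree_mul_le _ _) ?_
        have h2 : q2.degree + d.degree ≤ ((r + 1 : ℕ) : WithBot ℕ) + ((m - 1 : ℕ) : WithBot ℕ) :=
          add_le_add hq2deg (by rw [degree_eq_natDegree h]; exact_mod_cast hddn)
        refine le_trans h2 ?_
        rw [← Nat.cast_add]
        exact_mod_cast Nat.cast_le.mpr (by omega : (r + 1) + (m - 1) ≤ r + m)
  · rw [coeff_add, hA, hB]
end

section
/- Fix n ∈ ℕ and b ∈ ℝ with b ≠ 0. Define P : ℝ → ℝ by P(x) = Σ_{j=0}^{n} (−1)^j C(n,j) b^(−j) Π_{i=0}^{j−1} (x − i). Then: (i) P is the evaluation of a real polynomial of degree exactly n; (ii) for every natural number k < n, the series Σ_{m=0}^{∞} P(m) · m^k · b^m / m! converges and has sum 0. -/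
open Finset Polynomial


lemma findiff : ∀ (n : ℕ) (p : Polynomial ℝ), p.degree < n →
    ∑ j ∈ Finset.range (n+1), (-1:ℝ)^j * (n.choose j : ℝ) * p.eval (j : ℝ) = 0 := by
  intro n
  induction n with
  | zero =>
    intro p hp
    have hp0 : p = 0 := by
      by_contra h
      exact absurd hp (not_lt.2 (le_trans (by exact_mod_cast bot_le) (zero_le_degree_iff.2 h)))
    simp [hp0]
  | succ n ih =>
    intro p hp
    set q : Polynomial ℝ := p - p.comp (X + C 1) with hq
    have hqe : ∀ x : ℝ, q.eval x = p.eval x - p.eval (x + 1) := by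
      intro x; simp [hq, eval_comp]
    have hqdeg : q.degree < n := by
      by_cases hp0 : p = 0
      · simp [hq, hp0]
      · have hn1 : (X + C (1:ℝ)).natDegree = 1 := natDegree_X_add_C 1
        have hr0 : (p.comp (X + C 1)).leadingCoeff = p.leadingCoeff := by
          rw [leadingCoeff_comp (by rw [hn1]; exact one_ne_zero),
            (monic_X_add_C (1:ℝ)).leadingCoeff, one_pow, mul_one]
        have hrne : p.comp (X + C 1) ≠ 0 := by
          intro h
          apply hp0
          rw [← leadingCoeff_eq_zero, ← hr0, h, leadingCoeff_zero]
        have hnd : (p.comp (X + C 1)).natDegree = p.natDegree := by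
          rw [natDegree_comp, hn1, mul_one]
        have hdd : p.degree = (p.comp (X + C 1)).degree := by
          rw [degree_eq_natDegree hp0, degree_eq_natDegree hrne, hnd]
        have h1 : q.degree < p.degree := degree_sub_lt hdd hp0 hr0.symm
        have h2 : p.degree ≤ n := by
          rw [← natDegree_le_iff_degree_le]
          have := (natDegree_lt_iff_degree_lt hp0).2 hp
          omega
        exact lt_of_lt_of_le h1 h2
    have key : ∑ j ∈ Finset.range (n+2), (-1:ℝ)^j * ((n+1).choose j : ℝ) * p.eval (j : ℝ)
        = ∑ j ∈ Finset.range (n+1), (-1:ℝ)^j * (n.choose j : ℝ) * q.eval (j : ℝ) := by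
      have e1 : ∑ j ∈ Finset.range (n+2), (-1:ℝ)^j * ((n+1).choose j : ℝ) * p.eval (j : ℝ)
          = (∑ j ∈ Finset.range (n+1),
              ((-1:ℝ)^(j+1) * (n.choose j : ℝ) * p.eval ((j:ℝ)+1)
               + (-1:ℝ)^(j+1) * (n.choose (j+1) : ℝ) * p.eval ((j:ℝ)+1)))
            + (-1:ℝ)^0 * (n.choose 0 : ℝ) * p.eval (0 : ℝ) := by
        rw [Finset.sum_range_succ' (fun j => (-1:ℝ)^j * ((n+1).choose j : ℝ) * p.eval (j : ℝ)) (n+1)]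
        have hA : ∀ j ∈ Finset.range (n+1),
            (-1:ℝ)^(j+1) * (((n+1).choose (j+1)) : ℝ) * p.eval ((j+1 : ℕ) : ℝ)
            = (-1:ℝ)^(j+1) * (n.choose j : ℝ) * p.eval ((j:ℝ)+1)
               + (-1:ℝ)^(j+1) * (n.choose (j+1) : ℝ) * p.eval ((j:ℝ)+1) := by
          intro j _
          rw [Nat.choose_succ_succ]
          push_cast
          ring
        rw [Finset.sum_congr rfl hA]
        norm_num
      have e2 : ∑ j ∈ Finset.range (n+2), (-1:ℝ)^j * (n.choose j : ℝ) * p.eval (j : ℝ)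
          = (∑ j ∈ Finset.range (n+1), (-1:ℝ)^(j+1) * (n.choose (j+1) : ℝ) * p.eval ((j:ℝ)+1))
            + (-1:ℝ)^0 * (n.choose 0 : ℝ) * p.eval (0 : ℝ) := by
        rw [Finset.sum_range_succ' (fun j => (-1:ℝ)^j * (n.choose j : ℝ) * p.eval (j : ℝ)) (n+1)]
        have hA : ∀ j ∈ Finset.range (n+1),
            (-1:ℝ)^(j+1) * ((n.choose (j+1)) : ℝ) * p.eval ((j+1 : ℕ) : ℝ)
            = (-1:ℝ)^(j+1) * (n.choose (j+1) : ℝ) * p.eval ((j:ℝ)+1) := by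
          intro j _
          push_cast
          ring
        rw [Finset.sum_congr rfl hA]
        norm_num
      have e3 : ∑ j ∈ Finset.range (n+2), (-1:ℝ)^j * (n.choose j : ℝ) * p.eval (j : ℝ)
          = ∑ j ∈ Finset.range (n+1), (-1:ℝ)^j * (n.choose j : ℝ) * p.eval (j : ℝ) := by
        rw [Finset.sum_range_succ]
        simp [Nat.choose_succ_self]
      rw [e1, Finset.sum_add_distrib, add_assoc, ← e2, e3]
      rw [← Finset.sum_add_distrib]
      apply Finset.sum_congr rfl
      intro j _
      rw [hqe]
      push_cast
      ring
    rw [show n + 1 + 1 = n + 2 from rfl] at *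
    rw [key]
    exact ih q hqdeg


lemma summable_pow_mul_div_factorial (r : ℕ) (b : ℝ) :
    Summable (fun l : ℕ => (l:ℝ)^r * b^l / (l.factorial : ℝ)) := by
  have h2 : Summable (fun l : ℕ => (l:ℝ)^r * (1/2:ℝ)^l) := by
    simpa using summable_pow_mul_geometric_of_norm_lt_one (r := (1/2:ℝ)) r (by norm_num)
  have hb : BddAbove (Set.range fun l : ℕ => (l:ℝ)^r * (1/2:ℝ)^l) :=
    h2.tendsto_atTop_zero.bddAbove_range
  obtain ⟨M, hM⟩ := hb
  have hbound : ∀ l : ℕ, |(l:ℝ)^r * b^l / (l.factorial : ℝ)|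
      ≤ M * ((2*|b|)^l / (l.factorial : ℝ)) := by
    intro l
    have h1 : |(l:ℝ)^r * b^l / (l.factorial : ℝ)| = (l:ℝ)^r * |b|^l / (l.factorial : ℝ) := by
      rw [abs_div, abs_mul, abs_pow, abs_pow, abs_of_nonneg (by positivity : (0:ℝ) ≤ (l:ℝ)),
        abs_of_nonneg (by positivity : (0:ℝ) ≤ ((l.factorial : ℝ)))]
    rw [h1]
    have hMl : (l:ℝ)^r * (1/2:ℝ)^l ≤ M := hM ⟨l, rfl⟩
    have h12 : ((1:ℝ)/2)^l * (2:ℝ)^l = 1 := by rw [← mul_pow]; norm_num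
    have key : (l:ℝ)^r * |b|^l = ((l:ℝ)^r * (1/2:ℝ)^l) * (2^l * |b|^l) := by
      rw [show (((l:ℝ)^r * (1/2:ℝ)^l) * ((2:ℝ)^l * |b|^l)) = ((l:ℝ)^r * |b|^l) * ((1/2:ℝ)^l * 2^l) from by ring, h12, mul_one]
    rw [key, mul_pow, ← mul_div_assoc]
    gcongr
  have hgs : Summable (fun l : ℕ => M * ((2*|b|)^l / (l.factorial : ℝ))) :=
    (Real.summable_pow_div_factorial (2*|b|)).mul_left M
  exact (summable_abs_iff.mp (hgs.of_nonneg_of_le (fun l => abs_nonneg _) hbound))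

lemma summable_shift (k j : ℕ) (b : ℝ) :
    Summable (fun l : ℕ => (((l + j : ℕ)):ℝ)^k * b^l / (l.factorial : ℝ)) := by
  have he : ∀ l : ℕ, (((l + j : ℕ)):ℝ)^k * b^l / (l.factorial : ℝ)
      = ∑ r ∈ Finset.range (k+1),
          ((j:ℝ)^(k-r) * (k.choose r : ℝ)) * ((l:ℝ)^r * b^l / (l.factorial : ℝ)) := by
    intro l
    rw [Nat.cast_add, add_pow, Finset.sum_mul, Finset.sum_div]
    apply Finset.sum_congr rfl
    intro r _
    ring
  rw [funext he]
  apply summable_sum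
  intro r _
  exact (summable_pow_mul_div_factorial r b).mul_left _


/-- The Charlier case of the paper's Proposition: the polynomial
`P(x) = Σ_{j=0}^{n} (−1)^j C(n,j) b^(−j) Π_{i=0}^{j−1} (x − i)` coming from the discrete
Rodrigues formula has degree exactly `n` and is orthogonal to `x^k`, `k < n`, with respect
to the Charlier weight `b^m/m!` on `ℤ₊`. -/
theorem stmt_1 (n : ℕ) (b : ℝ) (hb : b ≠ 0) (P : ℝ → ℝ)
    (hP : ∀ x : ℝ, P x = ∑ j ∈ Finset.range (n + 1),
      (-1 : ℝ) ^ j * (n.choose j : ℝ) * b ^ (-(j : ℤ)) *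
        ∏ i ∈ Finset.range j, (x - (i : ℝ))) :
    (∃ p : Polynomial ℝ, p.degree = (n : ℕ) ∧ ∀ x : ℝ, P x = p.eval x) ∧
    (∀ k : ℕ, k < n →
      HasSum (fun m : ℕ => P m * (m : ℝ) ^ k * b ^ m / (m.factorial : ℝ)) 0) := by
  constructor
  · -- Part (i): polynomial of degree n
    set t : ℕ → Polynomial ℝ := fun j =>
      Polynomial.C ((-1:ℝ)^j * (n.choose j : ℝ) * b ^ (-(j:ℤ))) *
        ∏ i ∈ Finset.range j, (Polynomial.X - Polynomial.C (i:ℝ)) with ht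
    refine ⟨∑ j ∈ Finset.range (n+1), t j, ?_, ?_⟩
    · have hc : ∀ j, j ≤ n → ((-1:ℝ)^j * (n.choose j : ℝ) * b ^ (-(j:ℤ))) ≠ 0 := by
        intro j hj
        apply mul_ne_zero (mul_ne_zero (pow_ne_zero _ (by norm_num)) ?_) (zpow_ne_zero _ hb)
        exact_mod_cast (Nat.choose_pos hj).ne'
      have hdeg : ∀ j, j ≤ n → (t j).degree = j := by
        intro j hj
        rw [ht]
        simp only
        rw [degree_C_mul (hc j hj), degree_prod]
        simp only [degree_X_sub_C]
        rw [Finset.sum_const, Finset.card_range]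
        simp
      rw [Finset.sum_range_succ]
      have hsmall : (∑ j ∈ Finset.range n, t j).degree < (n : WithBot ℕ) := by
        apply lt_of_le_of_lt (degree_sum_le _ _)
        rw [Finset.sup_lt_iff (by exact_mod_cast WithBot.bot_lt_coe n)]
        intro j hj
        rw [hdeg j (le_of_lt (Finset.mem_range.1 hj))]
        exact_mod_cast Finset.mem_range.1 hj
      rw [degree_add_eq_right_of_degree_lt (by rw [hdeg n le_rfl]; exact hsmall)]
      exact hdeg n le_rfl
    · intro x
      rw [hP]
      rw [eval_finset_sum]
      apply Finset.sum_congr rfl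
      intro j _
      rw [ht]
      simp [eval_prod]
  · -- Part (ii)
    intro k hk
    set c : ℕ → ℕ → ℝ := fun j m =>
      ((-1:ℝ)^j * (n.choose j : ℝ) * b ^ (-(j:ℤ)) *
        ∏ i ∈ Finset.range j, ((m:ℝ) - (i:ℝ))) * (m:ℝ)^k * b^m / (m.factorial : ℝ) with hc
    set d : ℕ → ℕ → ℝ := fun j l =>
      ((-1:ℝ)^j * (n.choose j : ℝ)) * ((((l + j : ℕ)):ℝ)^k * b^l / (l.factorial : ℝ)) with hd
    have hdsum : ∀ j, Summable (d j) := fun j => (summable_shift k j b).mul_left _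
    -- pointwise identity
    have step1 : ∀ m : ℕ, P m * (m:ℝ)^k * b^m / (m.factorial : ℝ)
        = ∑ j ∈ Finset.range (n+1), c j m := by
      intro m
      rw [hP, Finset.sum_mul, Finset.sum_mul, Finset.sum_div]
    -- shifted identity
    have hcomp : ∀ j l : ℕ, c j (l + j) = d j l := by
      intro j l
      have hprod : ∏ i ∈ Finset.range j, ((((l+j : ℕ)):ℝ) - (i:ℝ))
          = ((l+j).descFactorial j : ℝ) := by
        rw [Nat.descFactorial_eq_prod_range, Nat.cast_prod]
        apply Finset.prod_congr rfl
        intro i hi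
        rw [Nat.cast_sub (le_trans (le_of_lt (Finset.mem_range.1 hi)) (Nat.le_add_left j l))]
      have hfact : (l.factorial : ℝ) * ((l+j).descFactorial j : ℝ) = ((l+j).factorial : ℝ) := by
        have := Nat.factorial_mul_descFactorial (Nat.le_add_left j l)
        rw [Nat.add_sub_cancel] at this
        exact_mod_cast this
      have hD : ((l+j).descFactorial j : ℝ) ≠ 0 := by
        have : (l+j).descFactorial j ≠ 0 := by
          rw [Ne, Nat.descFactorial_eq_zero_iff_lt]
          omega
        exact_mod_cast this
      rw [hc, hd]
      simp only
      rw [hprod, zpow_neg, zpow_natCast, pow_add, ← hfact]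
      have hlf : (l.factorial : ℝ) ≠ 0 := by exact_mod_cast l.factorial_ne_zero
      field_simp
    -- HasSum for each c j
    have hcs : ∀ j, HasSum (c j) (∑' l, d j l) := by
      intro j
      have hinj : Function.Injective (fun l : ℕ => l + j) := add_left_injective j
      have hz : ∀ m ∉ Set.range (fun l : ℕ => l + j), c j m = 0 := by
        intro m hm
        have hmj : m < j := by
          by_contra h
          exact hm ⟨m - j, show m - j + j = m by omega⟩
        have h0 : ∏ i ∈ Finset.range j, ((m:ℝ) - (i:ℝ)) = 0 :=
          Finset.prod_eq_zero (Finset.mem_range.2 hmj) (by simp)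
        rw [hc]
        simp only
        rw [h0]
        simp
      refine (hinj.hasSum_iff hz).1 ?_
      rw [show ((c j) ∘ fun l => l + j) = d j from funext fun l => hcomp j l]
      exact (hdsum j).hasSum
    have htot : HasSum (fun m => ∑ j ∈ Finset.range (n+1), c j m)
        (∑ j ∈ Finset.range (n+1), ∑' l, d j l) := hasSum_sum (fun j _ => hcs j)
    -- total is zero
    have hzero : ∀ l : ℕ, ∑ j ∈ Finset.range (n+1), d j l = 0 := by
      intro l
      have hdegp : ((Polynomial.C (l:ℝ) + Polynomial.X)^k).degree < (n : WithBot ℕ) := by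
        rw [degree_pow, show Polynomial.C (l:ℝ) + Polynomial.X
            = Polynomial.X + Polynomial.C (l:ℝ) from add_comm _ _, degree_X_add_C]
        rw [show (k • (1 : WithBot ℕ)) = (k : WithBot ℕ) from by simp]
        exact_mod_cast hk
      have hfd := findiff n ((Polynomial.C (l:ℝ) + Polynomial.X)^k) hdegp
      have hinner : ∑ j ∈ Finset.range (n+1),
          (-1:ℝ)^j * (n.choose j : ℝ) * (((l + j : ℕ)):ℝ)^k = 0 := by
        rw [← hfd]
        apply Finset.sum_congr rfl
        intro j _
        rw [eval_pow, eval_add, eval_C, eval_X]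
        push_cast
        ring
      calc ∑ j ∈ Finset.range (n+1), d j l
          = (∑ j ∈ Finset.range (n+1),
              (-1:ℝ)^j * (n.choose j : ℝ) * (((l + j : ℕ)):ℝ)^k) * (b^l / (l.factorial : ℝ)) := by
            rw [Finset.sum_mul]
            apply Finset.sum_congr rfl
            intro j _
            rw [hd]
            simp only
            ring
        _ = 0 := by rw [hinner, zero_mul]
    have hzero' : (∑ j ∈ Finset.range (n+1), ∑' l, d j l) = 0 := by
      have h1 : HasSum (fun l => ∑ j ∈ Finset.range (n+1), d j l)
          (∑ j ∈ Finset.range (n+1), ∑' l, d j l) :=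
        hasSum_sum (fun j _ => (hdsum j).hasSum)
      rw [show (fun l => ∑ j ∈ Finset.range (n+1), d j l) = fun _ => (0:ℝ) from
        funext hzero] at h1
      exact h1.unique hasSum_zero
    rw [show (fun m : ℕ => P m * (m:ℝ)^k * b^m / (m.factorial : ℝ))
        = fun m => ∑ j ∈ Finset.range (n+1), c j m from funext step1, ← hzero']
    exact htot
end

section
/- Fix n ∈ ℕ and b, α ∈ ℝ with 0 < |b| < 1 and α ≠ −m for every m ∈ ℕ. Define P : ℝ → ℝ by P(x) = Σ_{j=0}^{n} (−1)^j C(n,j) b^(−j) · Π_{i=0}^{j−1} (x − i) · Π_{i=0}^{n−j−1} (x + α + i). Then: (i) P is the evaluation of a real polynomial of degree exactly n; (ii) for every natural number k < n, the series Σ_{m=0}^{∞} P(m) · m^k · b^m · Γ(m+α) / m! converges and has sum 0. -/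
open Finset Filter Topology Polynomial fwdDiff


private lemma fwdDiff_poly_zero : ∀ (n : ℕ) (p : Polynomial ℝ), p.degree < n →
    ∀ t : ℝ, (fwdDiff (1:ℝ))^[n] (fun x => p.eval x) t = 0 := by
  intro n
  induction n with
  | zero =>
    intro p hp t
    have : p = 0 := by
      rw [← Polynomial.degree_eq_bot]
      exact Nat.WithBot.lt_zero_iff.mp (by exact_mod_cast hp)
    simp [this]
  | succ n ih =>
    intro p hp t
    have key : fwdDiff (1:ℝ) (fun x => p.eval x) = fun x => (p.comp (X + C 1) - p).eval x := by
      funext x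
      simp [fwdDiff, Polynomial.eval_comp]
    rw [Function.iterate_succ_apply, key]
    apply ih
    -- degree (p.comp (X + C 1) - p) < n
    rcases eq_or_ne p 0 with rfl | hp0
    · simp only [Polynomial.zero_comp, sub_zero, Polynomial.degree_zero]
      exact WithBot.bot_lt_coe n
    · have hc : (p.comp (X + C 1)).natDegree = p.natDegree := by
        rw [Polynomial.natDegree_comp, Polynomial.natDegree_X_add_C, mul_one]
      have hlc : (p.comp (X + C 1)).leadingCoeff = p.leadingCoeff := by
        rcases eq_or_ne p.natDegree 0 with h0 | h0
        · obtain ⟨c, rfl⟩ := Polynomial.natDegree_eq_zero.mp h0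
          simp
        · rw [Polynomial.leadingCoeff_comp (by rw [Polynomial.natDegree_X_add_C]; norm_num), Polynomial.leadingCoeff_X_add_C]
          simp
      have hcomp0 : p.comp (X + C 1) ≠ 0 := by
        intro h
        apply hp0
        rw [← Polynomial.leadingCoeff_eq_zero, ← hlc, h, Polynomial.leadingCoeff_zero]
      have hdeg : (p.comp (X + C 1)).degree = p.degree := by
        rw [Polynomial.degree_eq_natDegree hcomp0, Polynomial.degree_eq_natDegree hp0, hc]
      have hlt : (p.comp (X + C 1) - p).degree < p.degree :=
        hdeg ▸ Polynomial.degree_sub_lt hdeg hcomp0 hlc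
      calc (p.comp (X + C 1) - p).degree < p.degree := hlt
        _ ≤ n := by
          have := hp
          rw [Polynomial.degree_eq_natDegree hp0] at this ⊢
          exact_mod_cast Nat.lt_succ_iff.mp (by exact_mod_cast this)

private lemma findiff_zero (n k : ℕ) (hk : k < n) (t : ℝ) :
    ∑ j ∈ range (n+1), (-1:ℝ)^j * (n.choose j) * (t + j)^k = 0 := by
  have h := fwdDiff_iter_eq_sum_shift (1:ℝ) (fun x : ℝ => x^k) n t
  have h0 : (fwdDiff (1:ℝ))^[n] (fun x : ℝ => x^k) t = 0 := by
    have := fwdDiff_poly_zero n (X^k : ℝ[X]) (by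
      rw [Polynomial.degree_X_pow]; exact_mod_cast hk) t
    simpa using this
  rw [h0] at h
  have h2 : ∑ j ∈ range (n+1), (-1:ℝ)^j * (n.choose j) * (t + j)^k
      = (-1:ℝ)^n * ∑ j ∈ range (n+1), ((-1 : ℤ) ^ (n - j) * n.choose j) • ((t + j • (1:ℝ))^k) := by
    rw [Finset.mul_sum]
    refine Finset.sum_congr rfl fun j hj => ?_
    have hjn : j ≤ n := Nat.lt_succ_iff.mp (Finset.mem_range.mp hj)
    have : (-1:ℝ)^n * (-1:ℝ)^(n-j) = (-1:ℝ)^j := by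
      rw [← pow_add]
      have : n + (n - j) = j + 2 * (n - j) := by omega
      rw [this, pow_add, pow_mul, neg_one_sq, one_pow, mul_one]
    rw [zsmul_eq_mul]
    push_cast
    simp only [nsmul_eq_mul, mul_one]
    rw [← this]
    ring
  rw [h2, ← h, mul_zero]


private lemma gamma_shift (x : ℝ) (r : ℕ) (hx : ∀ i : ℕ, x + i ≠ 0) :
    Real.Gamma (x + r) = (∏ i ∈ range r, (x + i)) * Real.Gamma x := by
  induction r with
  | zero => simp
  | succ r ih =>
    have : x + (r + 1 : ℕ) = (x + r) + 1 := by push_cast; ring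
    rw [this, Real.Gamma_add_one (hx r), prod_range_succ, ih]
    ring

private lemma prod_sub_eq (m j : ℕ) :
    (∏ i ∈ range j, ((m:ℝ) - i)) = (m.descFactorial j : ℝ) := by
  rcases le_or_gt j m with h | h
  · induction j with
    | zero => simp
    | succ j ih =>
      rw [prod_range_succ, ih (le_of_lt h), Nat.descFactorial_succ]
      rw [Nat.cast_mul, Nat.cast_sub (le_of_lt h)]
      ring
  · rw [Nat.descFactorial_eq_zero_iff_lt.mpr h, Nat.cast_zero]
    apply Finset.prod_eq_zero (Finset.mem_range.mpr h)
    simp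


private lemma summable_aux (b c : ℝ) (hb0 : b ≠ 0) (hb1 : |b| < 1) (j k : ℕ) :
    Summable (fun t : ℕ => ((t:ℝ) + j)^k * b^t * Real.Gamma ((t:ℝ) + c) / (t.factorial : ℝ)) := by
  set a : ℕ → ℝ := fun t => ((t:ℝ) + j)^k * b^t * Real.Gamma ((t:ℝ) + c) / (t.factorial : ℝ) with ha
  have hcast : Tendsto (fun t : ℕ => (t:ℝ)) atTop atTop := tendsto_natCast_atTop_atTop
  have hev : ∀ᶠ t : ℕ in atTop, (1:ℝ) ≤ (t:ℝ) ∧ 0 < (t:ℝ) + c := by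
    filter_upwards [hcast.eventually_ge_atTop 1, hcast.eventually_ge_atTop (1 - c)] with t h1 h2
    exact ⟨h1, by linarith⟩
  apply summable_of_ratio_test_tendsto_lt_one hb1
  · -- eventually nonzero
    filter_upwards [hev] with t ⟨h1, h2⟩
    have hA : (0:ℝ) < (t:ℝ) + j := by positivity
    have hG : 0 < Real.Gamma ((t:ℝ) + c) := Real.Gamma_pos_of_pos h2
    have hF : (0:ℝ) < (t.factorial : ℝ) := by positivity
    rw [ha]
    positivity
  · -- ratio tendsto |b|
    have key : ∀ᶠ t : ℕ in atTop, ‖a (t+1)‖ / ‖a t‖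
        = |b| * ((1 + 1/((t:ℝ) + j))^k * (1 + (c-1)/((t:ℝ) + 1))) := by
      filter_upwards [hev] with t ⟨h1, h2⟩
      have hA : (0:ℝ) < (t:ℝ) + j := by positivity
      have hG : 0 < Real.Gamma ((t:ℝ) + c) := Real.Gamma_pos_of_pos h2
      have hF : (0:ℝ) < (t.factorial : ℝ) := by positivity
      have hD : (0:ℝ) < (t:ℝ) + 1 := by positivity
      have hGs : Real.Gamma (((t+1:ℕ):ℝ) + c) = ((t:ℝ) + c) * Real.Gamma ((t:ℝ) + c) := by
        have : ((t+1:ℕ):ℝ) + c = ((t:ℝ) + c) + 1 := by push_cast; ring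
        rw [this, Real.Gamma_add_one (ne_of_gt h2)]
      have hval : a (t+1) = (((t:ℝ) + 1) + j)^k * (b * b^t) * (((t:ℝ) + c) *
          Real.Gamma ((t:ℝ) + c)) / (((t:ℝ)+1) * (t.factorial : ℝ)) := by
        rw [ha]
        simp only [hGs, Nat.factorial_succ, Nat.cast_mul, pow_succ]
        push_cast
        ring
      have haat : ‖a t‖ = ((t:ℝ) + j)^k * |b|^t * Real.Gamma ((t:ℝ) + c) / (t.factorial : ℝ) := by
        rw [ha, Real.norm_eq_abs, abs_div, abs_mul, abs_mul, abs_pow, abs_pow,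
          abs_of_pos hA, abs_of_pos hG, abs_of_pos hF]
      have haat1 : ‖a (t+1)‖ = (((t:ℝ) + 1) + j)^k * (|b| * |b|^t) * (((t:ℝ) + c) *
          Real.Gamma ((t:ℝ) + c)) / (((t:ℝ)+1) * (t.factorial : ℝ)) := by
        rw [hval, Real.norm_eq_abs, abs_div, abs_mul, abs_mul, abs_mul, abs_mul, abs_mul,
          abs_pow, abs_pow, abs_of_pos (by positivity : (0:ℝ) < (t:ℝ) + 1 + j),
          abs_of_pos hG, abs_of_pos hF, abs_of_pos h2, abs_of_pos hD]
      rw [haat, haat1]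
      have e1 : (1 + 1/((t:ℝ) + j)) = (((t:ℝ)+1) + j) / ((t:ℝ) + j) := by
        field_simp
        ring
      have e2 : (1 + (c-1)/((t:ℝ) + 1)) = ((t:ℝ) + c) / ((t:ℝ) + 1) := by
        field_simp
        ring
      rw [e1, e2, div_pow]
      have hbt : (0:ℝ) < |b|^t := by positivity
      field_simp
    rw [show (𝓝 |b|) = 𝓝 (|b| * ((1 + 0)^k * (1 + 0))) by norm_num]
    apply Tendsto.congr' (key.mono fun t ht => ht.symm)
    apply Tendsto.const_mul
    apply Tendsto.mul
    · apply Tendsto.pow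
      apply Tendsto.const_add
      have : Tendsto (fun t : ℕ => (t:ℝ) + j) atTop atTop :=
        tendsto_atTop_add_const_right _ _ hcast
      simpa [one_div, Pi.inv_def] using this.inv_tendsto_atTop
    · apply Tendsto.const_add
      have : Tendsto (fun t : ℕ => (t:ℝ) + 1) atTop atTop :=
        tendsto_atTop_add_const_right _ _ hcast
      exact Tendsto.div_atTop tendsto_const_nhds this


/-- The Meixner case of the paper's Proposition: the polynomial
`P(x) = Σ_{j=0}^{n} (−1)^j C(n,j) b^(−j) Π_{i=0}^{j−1}(x−i) Π_{i=0}^{n−j−1}(x+α+i)`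
coming from the discrete Rodrigues formula has degree exactly `n` and is orthogonal to
`x^k`, `k < n`, with respect to the Meixner weight `b^m Γ(m+α)/m!` on `ℤ₊`. -/
theorem stmt_2 (n : ℕ) (b α : ℝ) (hb0 : 0 < |b|) (hb1 : |b| < 1)
    (hα : ∀ m : ℕ, α ≠ -(m : ℝ)) (P : ℝ → ℝ)
    (hP : ∀ x : ℝ, P x = ∑ j ∈ Finset.range (n + 1),
      (-1 : ℝ) ^ j * (n.choose j : ℝ) * b ^ (-(j : ℤ)) *
        (∏ i ∈ Finset.range j, (x - (i : ℝ))) *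
        ∏ i ∈ Finset.range (n - j), (x + α + (i : ℝ))) :
    (∃ p : Polynomial ℝ, p.degree = (n : ℕ) ∧ ∀ x : ℝ, P x = p.eval x) ∧
    (∀ k : ℕ, k < n →
      HasSum (fun m : ℕ =>
        P m * (m : ℝ) ^ k * b ^ m * Real.Gamma ((m : ℝ) + α) / (m.factorial : ℝ)) 0) := by
  have hbne : b ≠ 0 := by
    intro h; rw [h, abs_zero] at hb0; exact lt_irrefl 0 hb0
  have hbone : b ≠ 1 := by
    intro h; rw [h, abs_one] at hb1; exact lt_irrefl 1 hb1
  constructor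
  · -- polynomial of degree n
    set q : ℕ → Polynomial ℝ := fun j =>
      (∏ i ∈ range j, (X - C (i:ℝ))) * ∏ i ∈ range (n-j), (X + C (α + i)) with hq
    set p : Polynomial ℝ :=
      ∑ j ∈ range (n+1), C ((-1:ℝ)^j * (n.choose j) * b^(-(j:ℤ))) * q j with hp
    have hm1 : ∀ j, (∏ i ∈ range j, (X - C (i:ℝ))).Monic :=
      fun j => monic_prod_of_monic _ _ fun i _ => monic_X_sub_C _
    have hm2 : ∀ j, (∏ i ∈ range (n-j), (X + C (α + (i:ℝ)))).Monic :=
      fun j => monic_prod_of_monic _ _ fun i _ => monic_X_add_C _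
    have hqm : ∀ j, (q j).Monic := fun j => (hm1 j).mul (hm2 j)
    have hqd : ∀ j ∈ range (n+1), (q j).natDegree = n := by
      intro j hj
      have hjn : j ≤ n := Nat.lt_succ_iff.mp (Finset.mem_range.mp hj)
      rw [hq]
      rw [(hm1 j).natDegree_mul (hm2 j)]
      rw [Polynomial.natDegree_prod_of_monic _ _ (fun i _ => monic_X_sub_C _),
        Polynomial.natDegree_prod_of_monic _ _ (fun i _ => monic_X_add_C _)]
      simp only [Polynomial.natDegree_X_sub_C, Polynomial.natDegree_X_add_C]
      simp only [Finset.sum_const, Finset.card_range, smul_eq_mul, mul_one]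
      omega
    have hcoeff : p.coeff n = (1 - b⁻¹)^n := by
      rw [hp, Polynomial.finset_sum_coeff]
      have : ∀ j ∈ range (n+1), (C ((-1:ℝ)^j * (n.choose j) * b^(-(j:ℤ))) * q j).coeff n
          = (-b⁻¹)^j * 1^(n-j) * (n.choose j) := by
        intro j hj
        rw [Polynomial.coeff_C_mul]
        rw [show (q j).coeff n = 1 from hqd j hj ▸ (hqm j).coeff_natDegree]
        rw [zpow_neg, zpow_natCast, ← inv_pow, neg_pow, one_pow]
        ring
      rw [Finset.sum_congr rfl this, ← add_pow]
      ring_nf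
    have hc1 : (1 - b⁻¹) ≠ 0 := by
      intro h
      apply hbone
      have : b⁻¹ = 1 := by linarith
      rwa [inv_eq_one] at this
    refine ⟨p, ?_, ?_⟩
    · apply le_antisymm
      · apply (Polynomial.degree_sum_le _ _).trans
        apply Finset.sup_le
        intro j hj
        apply (Polynomial.degree_mul_le _ _).trans
        have h2 : (q j).degree ≤ (n : WithBot ℕ) := by
          rw [← hqd j hj]; exact Polynomial.degree_le_natDegree
        calc (C ((-1:ℝ)^j * (n.choose j) * b^(-(j:ℤ)))).degree + (q j).degree
            ≤ 0 + (n : WithBot ℕ) := add_le_add Polynomial.degree_C_le h2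
          _ = (n : WithBot ℕ) := zero_add _
      · apply Polynomial.le_degree_of_ne_zero
        rw [hcoeff]
        exact pow_ne_zero n hc1
    · intro x
      rw [hP, hp]
      rw [Polynomial.eval_finset_sum]
      refine Finset.sum_congr rfl fun j hj => ?_
      rw [Polynomial.eval_mul, Polynomial.eval_C, hq]
      simp only [Polynomial.eval_mul, Polynomial.eval_prod, Polynomial.eval_sub,
        Polynomial.eval_add, Polynomial.eval_X, Polynomial.eval_C]
      have : ∏ i ∈ range (n-j), (x + (α + (i:ℝ))) = ∏ i ∈ range (n-j), (x + α + (i:ℝ)) :=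
        Finset.prod_congr rfl fun i _ => by ring
      rw [this]
      ring
  · -- orthogonality
    intro k hk
    set G : ℕ → ℝ := fun t => b^t * Real.Gamma ((t:ℝ) + (α + n)) / (t.factorial : ℝ) with hG
    have hGamma_ne : ∀ m : ℕ, Real.Gamma ((m:ℝ) + α) ≠ 0 := by
      intro m
      apply Real.Gamma_ne_zero
      intro l h
      exact hα (m + l) (by push_cast; linarith)
    have hsummable : ∀ j : ℕ, Summable (fun t : ℕ => ((t:ℝ) + j)^k * G t) := by
      intro j
      have := summable_aux b (α + n) hbne hb1 j k
      apply this.congr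
      intro t
      rw [hG]
      ring
    -- pointwise identity
    have hpt : ∀ m : ℕ, P m * (m:ℝ)^k * b^m * Real.Gamma ((m:ℝ)+α) / (m.factorial : ℝ)
        = ∑ j ∈ range (n+1), (-1:ℝ)^j * (n.choose j) *
            ((m:ℝ)^k * (if j ≤ m then G (m - j) else 0)) := by
      intro m
      rw [hP, Finset.sum_mul, Finset.sum_mul, Finset.sum_mul, Finset.sum_div]
      refine Finset.sum_congr rfl fun j hj => ?_
      have hjn : j ≤ n := Nat.lt_succ_iff.mp (Finset.mem_range.mp hj)
      rcases le_or_gt j m with hjm | hjm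
      · rw [if_pos hjm, prod_sub_eq m j]
        have hx : ∀ i : ℕ, ((m:ℝ) + α) + i ≠ 0 := by
          intro i h
          exact hα (m + i) (by push_cast; linarith)
        have hΓ : (∏ i ∈ range (n-j), ((m:ℝ) + α + (i:ℝ)))
            = Real.Gamma ((m:ℝ) + α + ((n-j:ℕ):ℝ)) / Real.Gamma ((m:ℝ) + α) := by
          rw [eq_div_iff (hGamma_ne m)]
          have := (gamma_shift ((m:ℝ)+α) (n-j) hx).symm
          rw [← this]
        rw [hΓ]
        have hGarg : Real.Gamma (((m-j:ℕ):ℝ) + (α + n)) = Real.Gamma ((m:ℝ) + α + ((n-j:ℕ):ℝ)) := by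
          congr 1
          rw [Nat.cast_sub hjm, Nat.cast_sub hjn]
          ring
        have hzp : b ^ (-(j:ℤ)) = (b^j)⁻¹ := by rw [zpow_neg, zpow_natCast]
        have hpow : b^(m-j) * b^j = b^m := pow_sub_mul_pow b hjm
        have hdf : ((m-j).factorial : ℝ) * (m.descFactorial j : ℝ) = (m.factorial : ℝ) := by
          rw [← Nat.cast_mul, Nat.factorial_mul_descFactorial hjm]
        have hdfne : (m.descFactorial j : ℝ) ≠ 0 := by
          intro hzero
          have h0 : m.descFactorial j = 0 := by exact_mod_cast hzero
          have h1 : m < j := Nat.descFactorial_eq_zero_iff_lt.mp h0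
          omega
        rw [hG]
        simp only
        rw [hGarg, hzp, ← hpow, ← hdf]
        have h1 : Real.Gamma ((m:ℝ)+α) ≠ 0 := hGamma_ne m
        have h2 : ((m-j).factorial : ℝ) ≠ 0 := by positivity
        have h3 : (b:ℝ)^j ≠ 0 := pow_ne_zero _ hbne
        field_simp
      · rw [if_neg (by omega), prod_sub_eq m j,
          Nat.descFactorial_eq_zero_iff_lt.mpr hjm]
        simp
    -- HasSum for each j
    have hhs : ∀ j ∈ range (n+1), HasSum
        (fun m : ℕ => (-1:ℝ)^j * (n.choose j) * ((m:ℝ)^k * (if j ≤ m then G (m - j) else 0)))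
        ((-1:ℝ)^j * (n.choose j) * ∑' t : ℕ, ((t:ℝ) + j)^k * G t) := by
      intro j _
      apply HasSum.mul_left
      have hinj : Function.Injective (fun t : ℕ => t + j) := add_left_injective j
      rw [← hinj.hasSum_iff]
      · have heq : (fun m : ℕ => (m:ℝ)^k * (if j ≤ m then G (m - j) else 0)) ∘ (fun t : ℕ => t + j)
            = fun t : ℕ => ((t:ℝ) + j)^k * G t := by
          funext t
          simp only [Function.comp_apply, Nat.add_sub_cancel, if_pos (Nat.le_add_left j t)]
          push_cast
          ring
        rw [heq]
        exact (hsummable j).hasSum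
      · intro m hm
        have hmj : m < j := by
          by_contra h
          push_neg at h
          exact hm ⟨m - j, by simp; omega⟩
        rw [if_neg (by omega), mul_zero]
    have htotal := hasSum_sum hhs
    have hzero : ∑ j ∈ range (n+1),
        (-1:ℝ)^j * (n.choose j) * ∑' t : ℕ, ((t:ℝ) + j)^k * G t = 0 := by
      have hstep : ∀ j ∈ range (n+1), (-1:ℝ)^j * (n.choose j) * ∑' t : ℕ, ((t:ℝ) + j)^k * G t
          = ∑' t : ℕ, (-1:ℝ)^j * (n.choose j) * (((t:ℝ) + j)^k * G t) :=
        fun j _ => (tsum_mul_left).symm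
      rw [Finset.sum_congr rfl hstep,
        ← Summable.tsum_finsetSum (fun j _ => Summable.mul_left _ (hsummable j))]
      have hz : ∀ t : ℕ, ∑ j ∈ range (n+1),
          (-1:ℝ)^j * (n.choose j) * (((t:ℝ) + j)^k * G t) = 0 := by
        intro t
        have h1 : ∑ j ∈ range (n+1), (-1:ℝ)^j * (n.choose j) * (((t:ℝ) + j)^k * G t)
            = (∑ j ∈ range (n+1), (-1:ℝ)^j * (n.choose j) * ((t:ℝ) + j)^k) * G t := by
          rw [Finset.sum_mul]
          exact Finset.sum_congr rfl fun j _ => by ring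
        rw [h1, findiff_zero n k hk, zero_mul]
      rw [tsum_congr hz, tsum_zero]
    rw [hzero] at htotal
    exact htotal.congr_fun hpt
end

section
/- Fix N, n ∈ ℕ with n ≤ N, and b ∈ ℝ with b ≠ 0 and b ≠ −1. Define P : ℝ → ℝ by P(x) = Σ_{j=0}^{n} (−1)^j C(n,j) b^(−j) · Π_{i=0}^{j−1} (x − i) · Π_{i=0}^{n−j−1} (N − x − i). Then: (i) P is the evaluation of a real polynomial of degree exactly n; (ii) for every natural number k < n, Σ_{m=0}^{N} P(m) · m^k · b^m / (m! · (N−m)!) = 0. -/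
open Finset Polynomial

lemma prodCastSub (m j : ℕ) :
    ∏ i ∈ Finset.range j, ((m : ℝ) - (i : ℝ)) = (m.descFactorial j : ℝ) := by
  induction j with
  | zero => simp
  | succ j ih =>
    rw [Finset.prod_range_succ, ih, Nat.descFactorial_succ]
    rcases le_or_gt j m with h | h
    · push_cast [Nat.cast_sub h]; ring
    · have : m.descFactorial j = 0 := Nat.descFactorial_eq_zero_iff_lt.2 h
      simp [this]

lemma taylorLC (p : Polynomial ℝ) : (Polynomial.taylor (1:ℝ) p).leadingCoeff = p.leadingCoeff := by
  rw [Polynomial.taylor_apply,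
    Polynomial.leadingCoeff_comp (by rw [Polynomial.natDegree_X_add_C]; norm_num),
    Polynomial.leadingCoeff_X_add_C, one_pow, mul_one]

lemma finDiff (n : ℕ) : ∀ (p : Polynomial ℝ), p.degree < (n : ℕ) → ∀ t : ℝ,
    ∑ j ∈ Finset.range (n + 1), (-1 : ℝ) ^ j * (n.choose j : ℝ) * p.eval (t + j) = 0 := by
  induction n with
  | zero =>
    intro p hp t
    have : p = 0 := by
      rw [← Polynomial.degree_eq_bot]
      exact Nat.WithBot.lt_zero_iff.1 (by simpa using hp)
    simp [this]
  | succ n ih =>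
    intro p hp t
    set q : Polynomial ℝ := p - Polynomial.taylor 1 p with hq
    have hqd : q.degree < (n : ℕ) := by
      rcases eq_or_ne p 0 with h | h
      · have hz : q = 0 := by simp [hq, h]
        rw [hz, Polynomial.degree_zero]
        exact_mod_cast WithBot.bot_lt_coe n
      · have htne : Polynomial.taylor (1:ℝ) p ≠ 0 := fun hc => h <| by
          apply Polynomial.taylor_injective (1:ℝ); simpa using hc
        have hdeg : p.degree = (Polynomial.taylor (1:ℝ) p).degree := by
          rw [Polynomial.degree_eq_natDegree h, Polynomial.degree_eq_natDegree htne,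
            Polynomial.natDegree_taylor]
        have hlt : q.degree < p.degree :=
          Polynomial.degree_sub_lt hdeg h (taylorLC p).symm
        have hple : p.degree ≤ (n : ℕ) := by
          rw [Polynomial.degree_eq_natDegree h] at hp ⊢
          exact_mod_cast Nat.lt_succ_iff.1 (by exact_mod_cast hp)
        exact lt_of_lt_of_le hlt hple
    set f : ℕ → ℝ := fun j => p.eval (t + j) with hf
    have h1 : ∑ j ∈ Finset.range (n + 2), (-1:ℝ)^j * ((n+1).choose j : ℝ) * f j
        = (∑ j ∈ Finset.range (n + 1), (-1:ℝ)^(j+1) * ((n+1).choose (j+1) : ℝ) * f (j+1)) + f 0 := by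
      rw [Finset.sum_range_succ' (fun j => (-1:ℝ)^j * ((n+1).choose j : ℝ) * f j) (n+1)]
      simp
    have h2 : ∑ j ∈ Finset.range (n + 2), (-1:ℝ)^j * ((n).choose j : ℝ) * f j
        = (∑ j ∈ Finset.range (n + 1), (-1:ℝ)^(j+1) * ((n).choose (j+1) : ℝ) * f (j+1)) + f 0 := by
      rw [Finset.sum_range_succ' (fun j => (-1:ℝ)^j * ((n).choose j : ℝ) * f j) (n+1)]
      simp
    have hA : ∑ j ∈ Finset.range (n + 2), (-1:ℝ)^j * (n.choose j : ℝ) * f j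
        = ∑ j ∈ Finset.range (n + 1), (-1:ℝ)^j * (n.choose j : ℝ) * f j := by
      rw [Finset.sum_range_succ, Nat.choose_succ_self]; simp
    have hsplit : ∀ j : ℕ, (-1:ℝ)^(j+1) * ((n+1).choose (j+1) : ℝ) * f (j+1)
        = (-1:ℝ)^(j+1) * (n.choose j : ℝ) * f (j+1)
          + (-1:ℝ)^(j+1) * (n.choose (j+1) : ℝ) * f (j+1) := by
      intro j
      have hc : ((n+1).choose (j+1) : ℝ) = (n.choose j : ℝ) + (n.choose (j+1) : ℝ) := by
        exact_mod_cast congrArg (Nat.cast (R := ℝ)) (Nat.choose_succ_succ n j)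
      rw [hc]; ring
    have key : ∑ j ∈ Finset.range (n + 2), (-1:ℝ)^j * ((n+1).choose j : ℝ) * f j
        = ∑ j ∈ Finset.range (n + 1), (-1:ℝ)^j * (n.choose j : ℝ) * (f j - f (j+1)) := by
      rw [h1, Finset.sum_congr rfl (fun j _ => hsplit j), Finset.sum_add_distrib]
      have hT : ∑ j ∈ Finset.range (n+1), (-1:ℝ)^(j+1) * (n.choose (j+1) : ℝ) * f (j+1)
          = (∑ j ∈ Finset.range (n+1), (-1:ℝ)^j * (n.choose j : ℝ) * f j) - f 0 := by
        rw [← hA, h2]; ring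
      rw [hT]
      have hterm : ∀ j:ℕ, (-1:ℝ)^j * (n.choose j:ℝ) * (f j - f (j+1))
          = (-1:ℝ)^(j+1) * (n.choose j:ℝ) * f (j+1) + (-1:ℝ)^j * (n.choose j:ℝ) * f j := by
        intro j; ring
      rw [Finset.sum_congr rfl (fun j _ => hterm j), Finset.sum_add_distrib]
      ring
    have hfq : ∀ j : ℕ, f j - f (j+1) = q.eval (t + j) := by
      intro j
      have : t + ((j:ℕ) + 1 : ℕ) = (t + j) + 1 := by push_cast; ring
      simp only [hf, hq, Polynomial.eval_sub, Polynomial.taylor_eval, this]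
    have := ih q hqd t
    calc ∑ j ∈ Finset.range (n + 1 + 1), (-1:ℝ)^j * ((n+1).choose j : ℝ) * p.eval (t + j)
        = ∑ j ∈ Finset.range (n + 2), (-1:ℝ)^j * ((n+1).choose j : ℝ) * f j := rfl
      _ = ∑ j ∈ Finset.range (n + 1), (-1:ℝ)^j * (n.choose j : ℝ) * (f j - f (j+1)) := key
      _ = ∑ j ∈ Finset.range (n + 1), (-1:ℝ)^j * (n.choose j : ℝ) * q.eval (t + j) := by
          exact Finset.sum_congr rfl (fun j _ => by rw [hfq j])
      _ = 0 := ih q hqd t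

lemma prodNegShift (m : ℕ) (g : ℕ → ℝ) :
    ∏ i ∈ Finset.range m, (-(g i)) = (-1:ℝ)^m * ∏ i ∈ Finset.range m, g i := by
  rw [show (fun i => -(g i)) = fun i => (-1:ℝ) * g i from funext fun i => by ring,
    Finset.prod_mul_distrib, Finset.prod_const]
  simp




/-- The Kravchuk case of the paper's Proposition: the polynomial
`P(x) = Σ_{j=0}^{n} (−1)^j C(n,j) b^(−j) Π_{i=0}^{j−1}(x−i) Π_{i=0}^{n−j−1}(N−x−i)`
coming from the discrete Rodrigues formula has degree exactly `n` and is orthogonal to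
`x^k`, `k < n`, with respect to the Kravchuk weight `b^m/(m!(N−m)!)` on `{0,…,N}`. -/
theorem stmt_3 (N n : ℕ) (hnN : n ≤ N) (b : ℝ) (hb0 : b ≠ 0) (hb1 : b ≠ -1) (P : ℝ → ℝ)
    (hP : ∀ x : ℝ, P x = ∑ j ∈ Finset.range (n + 1),
      (-1 : ℝ) ^ j * (n.choose j : ℝ) * b ^ (-(j : ℤ)) *
        (∏ i ∈ Finset.range j, (x - (i : ℝ))) *
        ∏ i ∈ Finset.range (n - j), ((N : ℝ) - x - (i : ℝ))) :
    (∃ p : Polynomial ℝ, p.degree = (n : ℕ) ∧ ∀ x : ℝ, P x = p.eval x) ∧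
    (∀ k : ℕ, k < n →
      ∑ m ∈ Finset.range (N + 1),
        P m * (m : ℝ) ^ k * b ^ m / ((m.factorial : ℝ) * ((N - m).factorial : ℝ)) = 0) := by
  constructor
  · have hbz : ∀ j : ℕ, b ^ (-(j:ℤ)) = (b^j)⁻¹ := fun j => by
      rw [zpow_neg, zpow_natCast]
    set c : ℕ → ℝ := fun j => (-1:ℝ)^j * (n.choose j : ℝ) * (b^j)⁻¹ with hc
    set M : ℕ → Polynomial ℝ := fun j =>
      (∏ i ∈ Finset.range j, (X - C (i:ℝ))) *
        ∏ i ∈ Finset.range (n-j), (X - C ((N:ℝ) - i)) with hM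
    have hMmonic : ∀ j, (M j).Monic := fun j =>
      ((monic_prod_of_monic _ _ fun i _ => monic_X_sub_C _).mul
        (monic_prod_of_monic _ _ fun i _ => monic_X_sub_C _))
    have hMdeg : ∀ j ∈ Finset.range (n+1), (M j).natDegree = n := by
      intro j hj
      have hj' : j ≤ n := Nat.lt_succ_iff.1 (Finset.mem_range.1 hj)
      rw [hM]
      rw [Polynomial.Monic.natDegree_mul (monic_prod_of_monic _ _ fun i _ => monic_X_sub_C _)
        (monic_prod_of_monic _ _ fun i _ => monic_X_sub_C _),
        Polynomial.natDegree_prod_of_monic _ _ (fun i _ => monic_X_sub_C _),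
        Polynomial.natDegree_prod_of_monic _ _ (fun i _ => monic_X_sub_C _)]
      simp only [natDegree_X_sub_C, Finset.sum_const, smul_eq_mul, mul_one, Finset.card_range]
      omega
    set p : Polynomial ℝ := ∑ j ∈ Finset.range (n+1), C (c j * (-1:ℝ)^(n-j)) * M j with hp2
    refine ⟨p, ?_, ?_⟩
    · have hle : p.degree ≤ (n : ℕ) := by
        refine le_trans (Polynomial.degree_sum_le _ _) ?_
        refine Finset.sup_le fun j hj => ?_
        refine le_trans (Polynomial.degree_mul_le _ _) ?_
        refine le_trans (add_le_add (Polynomial.degree_C_le) (Polynomial.degree_le_natDegree)) ?_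
        rw [hMdeg j hj]
        simp
      have hcoeff : p.coeff n = (-1:ℝ)^n * (b⁻¹ + 1)^n := by
        rw [hp2, Polynomial.finset_sum_coeff]
        have : ∀ j ∈ Finset.range (n+1), (C (c j * (-1:ℝ)^(n-j)) * M j).coeff n
            = c j * (-1:ℝ)^(n-j) := by
          intro j hj
          rw [Polynomial.coeff_C_mul]
          have : (M j).coeff n = 1 := by
            have := (hMmonic j).coeff_natDegree
            rwa [hMdeg j hj] at this
          rw [this, mul_one]
        rw [Finset.sum_congr rfl this]
        rw [add_pow b⁻¹ 1 n, Finset.mul_sum]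
        refine Finset.sum_congr rfl fun j hj => ?_
        have hj' : j ≤ n := Nat.lt_succ_iff.1 (Finset.mem_range.1 hj)
        have hpow : (-1:ℝ)^j * (-1:ℝ)^(n-j) = (-1:ℝ)^n := by
          rw [← pow_add]; congr 1; omega
        rw [hc]
        simp only [one_pow, mul_one]
        calc (-1:ℝ)^j * (n.choose j : ℝ) * (b^j)⁻¹ * (-1:ℝ)^(n-j)
            = ((-1:ℝ)^j * (-1:ℝ)^(n-j)) * ((n.choose j : ℝ) * (b^j)⁻¹) := by ring
          _ = (-1:ℝ)^n * ((b⁻¹)^j * (n.choose j : ℝ)) := by rw [hpow, ← inv_pow]; ring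
      have hne : p.coeff n ≠ 0 := by
        rw [hcoeff]
        have h1 : b⁻¹ + 1 ≠ 0 := by
          intro h
          apply hb1
          field_simp at h
          linarith
        exact mul_ne_zero (pow_ne_zero _ (by norm_num)) (pow_ne_zero _ h1)
      exact Polynomial.degree_eq_of_le_of_coeff_ne_zero hle hne
    · intro x
      rw [hP, hp2, Polynomial.eval_finset_sum]
      refine Finset.sum_congr rfl fun j hj => ?_
      rw [Polynomial.eval_mul, Polynomial.eval_C, Polynomial.eval_mul,
        Polynomial.eval_prod, Polynomial.eval_prod]
      simp only [Polynomial.eval_sub, Polynomial.eval_X, Polynomial.eval_C]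
      have h2 : ∏ i ∈ Finset.range (n-j), ((N:ℝ) - x - i)
          = (-1:ℝ)^(n-j) * ∏ i ∈ Finset.range (n-j), (x - ((N:ℝ) - i)) := by
        rw [← prodNegShift]
        exact Finset.prod_congr rfl fun i _ => by ring
      rw [h2, hbz, hc]
      ring
  · intro k hk
    have hbz : ∀ j : ℕ, b ^ (-(j:ℤ)) = (b^j)⁻¹ := fun j => by rw [zpow_neg, zpow_natCast]
    set g : ℕ → ℕ → ℝ := fun j m =>
      (-1:ℝ)^j * (n.choose j : ℝ) * (b^j)⁻¹ * (m.descFactorial j : ℝ)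
        * ((N-m).descFactorial (n-j) : ℝ) * (m:ℝ)^k * b^m
        / ((m.factorial : ℝ) * ((N-m).factorial : ℝ)) with hg
    -- Step A: rewrite each summand as a j-sum
    have stepA : ∀ m ∈ Finset.range (N+1),
        P m * (m:ℝ)^k * b^m / ((m.factorial : ℝ) * ((N-m).factorial : ℝ))
          = ∑ j ∈ Finset.range (n+1), g j m := by
      intro m hm
      have hmN : m ≤ N := Nat.lt_succ_iff.1 (Finset.mem_range.1 hm)
      rw [hP, Finset.sum_mul, Finset.sum_mul, Finset.sum_div]
      refine Finset.sum_congr rfl fun j hj => ?_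
      have h1 : ∏ i ∈ Finset.range j, ((m:ℝ) - (i:ℝ)) = (m.descFactorial j : ℝ) :=
        prodCastSub m j
      have h2 : ∏ i ∈ Finset.range (n-j), ((N:ℝ) - (m:ℝ) - (i:ℝ))
          = ((N-m).descFactorial (n-j) : ℝ) := by
        rw [← prodCastSub (N-m) (n-j)]
        exact Finset.prod_congr rfl fun i _ => by rw [Nat.cast_sub hmN]
      rw [h1, h2, hbz, hg]
    rw [Finset.sum_congr rfl stepA, Finset.sum_comm]
    -- Step B: restrict the m-sum and reindex
    have stepB : ∀ j ∈ Finset.range (n+1),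
        ∑ m ∈ Finset.range (N+1), g j m = ∑ t ∈ Finset.range (N-n+1), g j (j+t) := by
      intro j hj
      have hjn : j ≤ n := Nat.lt_succ_iff.1 (Finset.mem_range.1 hj)
      have hsub : Finset.Ico j (N-n+j+1) ⊆ Finset.range (N+1) := by
        intro m hm
        rw [Finset.mem_Ico] at hm
        rw [Finset.mem_range]
        omega
      have hzero : ∀ m ∈ Finset.range (N+1), m ∉ Finset.Ico j (N-n+j+1) → g j m = 0 := by
        intro m hm hm'
        have hmN : m ≤ N := Nat.lt_succ_iff.1 (Finset.mem_range.1 hm)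
        rw [Finset.mem_Ico, not_and_or, not_le, not_lt] at hm'
        rcases hm' with h | h
        · have : m.descFactorial j = 0 := Nat.descFactorial_eq_zero_iff_lt.2 h
          simp [hg, this]
        · have : (N-m).descFactorial (n-j) = 0 :=
            Nat.descFactorial_eq_zero_iff_lt.2 (by omega)
          simp [hg, this]
      rw [← Finset.sum_subset hsub hzero, Finset.sum_Ico_eq_sum_range]
      have : N-n+j+1-j = N-n+1 := by omega
      rw [this]
    rw [Finset.sum_congr rfl stepB, Finset.sum_comm]
    -- Step C: simplify g j (j+t)
    have stepC : ∀ j ∈ Finset.range (n+1), ∀ t ∈ Finset.range (N-n+1),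
        g j (j+t) = ((-1:ℝ)^j * (n.choose j : ℝ) * ((j+t:ℕ):ℝ)^k)
          * (b^t / ((t.factorial : ℝ) * ((N-n-t).factorial : ℝ))) := by
      intro j hj t ht
      have hjn : j ≤ n := Nat.lt_succ_iff.1 (Finset.mem_range.1 hj)
      have htn : t ≤ N-n := Nat.lt_succ_iff.1 (Finset.mem_range.1 ht)
      have hd1 : ((j+t).factorial : ℝ)
          = ((j+t).descFactorial j : ℝ) * (t.factorial : ℝ) := by
        have h0 := Nat.factorial_mul_descFactorial (Nat.le_add_right j t)
        have h' : j + t - j = t := by omega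
        rw [h'] at h0
        calc ((j+t).factorial : ℝ) = ((t.factorial * (j+t).descFactorial j : ℕ) : ℝ) := by rw [h0]
          _ = _ := by push_cast; ring
      have hNjt : N - (j+t) = N-j-t := by omega
      have hd2 : ((N-j-t).factorial : ℝ)
          = ((N-j-t).descFactorial (n-j) : ℝ) * ((N-n-t).factorial : ℝ) := by
        have hle : n-j ≤ N-j-t := by omega
        have h0 := Nat.factorial_mul_descFactorial hle
        have h' : N-j-t-(n-j) = N-n-t := by omega
        rw [h'] at h0
        calc ((N-j-t).factorial : ℝ)
            = (((N-n-t).factorial * (N-j-t).descFactorial (n-j) : ℕ) : ℝ) := by rw [h0]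
          _ = _ := by push_cast; ring
      have hD1 : ((j+t).descFactorial j : ℝ) ≠ 0 :=
        Nat.cast_ne_zero.2 (fun h => by
          have := Nat.descFactorial_eq_zero_iff_lt.1 h; omega)
      have hD2 : ((N-j-t).descFactorial (n-j) : ℝ) ≠ 0 :=
        Nat.cast_ne_zero.2 (fun h => by
          have := Nat.descFactorial_eq_zero_iff_lt.1 h; omega)
      have hbj : b^(j+t) = b^j * b^t := pow_add b j t
      rw [hg]
      simp only [hNjt]
      rw [hd1, hd2, hbj]
      have ht0 : (t.factorial : ℝ) ≠ 0 := Nat.cast_ne_zero.2 t.factorial_ne_zero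
      have hs0 : ((N-n-t).factorial : ℝ) ≠ 0 := Nat.cast_ne_zero.2 (N-n-t).factorial_ne_zero
      have hbjne : b^j ≠ 0 := pow_ne_zero _ hb0
      field_simp
    rw [Finset.sum_congr rfl (fun t ht => Finset.sum_congr rfl (fun j hj => stepC j hj t ht))]
    -- Step D: inner alternating sum vanishes
    refine Finset.sum_eq_zero fun t ht => ?_
    rw [← Finset.sum_mul]
    have hfd := finDiff n (Polynomial.X ^ k) (by
      rw [Polynomial.degree_X_pow]; exact_mod_cast hk) (t:ℝ)
    have : ∑ j ∈ Finset.range (n+1), (-1:ℝ)^j * (n.choose j : ℝ) * ((j+t:ℕ):ℝ)^k = 0 := by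
      rw [← hfd]
      refine Finset.sum_congr rfl fun j _ => ?_
      rw [Polynomial.eval_pow, Polynomial.eval_X]
      push_cast
      ring
    rw [this, zero_mul]
end

section
/- Fix N, n ∈ ℕ with n ≤ N, and α, β ∈ ℝ such that α ≠ −m and β ≠ −m for every integer m with 0 ≤ m ≤ N−1, and α + β ≠ −m for every integer m with 0 ≤ m ≤ 2N−2. Define Q : ℝ → ℝ by Q(x) = Σ_{j=0}^{n} (−1)^j C(n,j) · Π_{i=0}^{j−1} [(x − i)(β + N − x + i)] · Π_{i=0}^{n−j−1} [(x + α + i)(N − x − i)]. Then: (i) Q is the evaluation of a real polynomial of degree exactly n; (ii) for every natural number k < n, Σ_{m=0}^{N} Q(m) · m^k · w(m) = 0, where w(m) = (Π_{i=0}^{m−1}(α+i)) · (Π_{i=0}^{N−m−1}(β+i)) / (m! · (N−m)!). -/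
open Finset Polynomial


private def F (n k : ℕ) (x : ℝ) : ℝ := ∑ j ∈ Finset.range (n+1), (-1:ℝ)^j * (n.choose j : ℝ) * (x + j)^k

private lemma F_succ (n k : ℕ) (x : ℝ) : F (n+1) k x = F n k x - F n k (x+1) := by
  have hsplit : F (n+1) k x
      = (∑ j ∈ range (n+1), ((-1:ℝ)^(j+1) * (n.choose (j+1) : ℝ) * (x + (j+1:ℕ))^k
          + -((-1:ℝ)^j * (n.choose j : ℝ) * ((x+1) + j)^k)))
        + x^k := by
    rw [F, Finset.sum_range_succ' (fun j => (-1:ℝ)^j * (((n+1).choose j : ℕ) : ℝ) * (x + j)^k)]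
    congr 1
    · apply Finset.sum_congr rfl
      intro j _
      rw [Nat.choose_succ_succ']
      push_cast
      ring
    · norm_num
  rw [hsplit, Finset.sum_add_distrib]
  have hB : (∑ j ∈ range (n+1), (-1:ℝ)^(j+1) * (n.choose (j+1) : ℝ) * (x + (j+1:ℕ))^k) + x^k
      = F n k x := by
    have hn1 : ∑ j ∈ range (n+1+1), (-1:ℝ)^j * (n.choose j : ℝ) * (x + j)^k = F n k x := by
      rw [Finset.sum_range_succ]
      simp [F, Nat.choose_succ_self]
    rw [← hn1, Finset.sum_range_succ' (fun j => (-1:ℝ)^j * ((n.choose j : ℕ) : ℝ) * (x + j)^k) (n+1)]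
    norm_num
  have hA : (∑ j ∈ range (n+1), -((-1:ℝ)^j * (n.choose j : ℝ) * ((x+1) + j)^k))
      = - F n k (x+1) := by
    rw [F]; exact Finset.sum_neg_distrib _
  rw [hA]
  rw [← hB]
  ring

lemma alt_sum_pow : ∀ n : ℕ, ∀ k : ℕ, k < n → ∀ x : ℝ,
    ∑ j ∈ Finset.range (n+1), (-1:ℝ)^j * (n.choose j : ℝ) * (x + j)^k = 0 := by
  intro n
  induction n with
  | zero => intro k hk; omega
  | succ n ih =>
    intro k hk x
    have key : F (n+1) k x = 0 := by
      rw [F_succ]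
      have expand : ∀ y : ℝ, (y+1)^k = (∑ i ∈ range k, (k.choose i : ℝ) * y^i) + y^k := by
        intro y
        have h1 : (y+1)^k = ∑ i ∈ range (k+1), (k.choose i : ℝ) * y^i := by
          rw [add_pow]
          exact Finset.sum_congr rfl fun i _ => by rw [one_pow]; ring
        rw [h1, Finset.sum_range_succ, Nat.choose_self]
        norm_num
      have hFx : F n k (x+1) - F n k x = ∑ i ∈ range k, (k.choose i : ℝ) * F n i x := by
        rw [F, F, ← Finset.sum_sub_distrib]
        have hterm : ∀ j ∈ range (n+1), (-1:ℝ)^j * (n.choose j : ℝ) * ((x+1) + j)^k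
            - (-1:ℝ)^j * (n.choose j : ℝ) * (x + j)^k
            = ∑ i ∈ range k, (k.choose i : ℝ) * ((-1:ℝ)^j * (n.choose j : ℝ) * (x + j)^i) := by
          intro j _
          have h2 : ((x+1) + j)^k = ((x + j) + 1)^k := by ring_nf
          rw [h2, expand (x + j)]
          rw [mul_add, add_sub_cancel_right, Finset.mul_sum]
          exact Finset.sum_congr rfl fun i _ => by ring
        rw [Finset.sum_congr rfl hterm, Finset.sum_comm]
        exact Finset.sum_congr rfl fun i _ => by rw [F, Finset.mul_sum]
      have hzero : ∑ i ∈ range k, (k.choose i : ℝ) * F n i x = 0 :=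
        Finset.sum_eq_zero fun i hi => by
          rw [F, ih i (by simp at hi; omega) x, mul_zero]
      have : F n k (x+1) = F n k x := by
        have := hFx; rw [hzero] at this; linarith
      rw [this]; ring
    rw [← key, F]


private noncomputable def gw (N n : ℕ) (α β : ℝ) (t : ℕ) : ℝ :=
  if t + n ≤ N then
    (∏ i ∈ Finset.range (t+n), (α + (i:ℝ))) * (∏ i ∈ Finset.range (N-t), (β + (i:ℝ)))
      / ((t.factorial : ℝ) * ((N-n-t).factorial : ℝ))
  else 0

private lemma pointwise (N n : ℕ) (hnN : n ≤ N) (α β : ℝ) (m : ℕ) (hm : m ≤ N)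
    (j : ℕ) (hj : j ≤ n) :
    ((∏ i ∈ Finset.range j, (((m:ℝ)) - i) * (β + (N:ℝ) - m + i)) *
     (∏ i ∈ Finset.range (n-j), (((m:ℝ)) + α + i) * ((N:ℝ) - m - i))) *
     ((∏ i ∈ Finset.range m, (α + (i:ℝ))) * (∏ i ∈ Finset.range (N-m), (β + (i:ℝ)))
        / ((m.factorial : ℝ) * ((N-m).factorial : ℝ)))
    = if j ≤ m then gw N n α β (m-j) else 0 := by
  by_cases hjm : j ≤ m
  · rw [if_pos hjm]
    by_cases hsup : (m - j) + n ≤ N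
    · rw [gw, if_pos hsup]
      have hnjNm : n - j ≤ N - m := by omega
      -- split the two Q-products
      rw [Finset.prod_mul_distrib, Finset.prod_mul_distrib]
      have e1a : (∏ i ∈ Finset.range j, ((m:ℝ) - i)) = ((m.descFactorial j : ℕ) : ℝ) := by
        rw [Nat.descFactorial_eq_prod_range, Nat.cast_prod]
        exact Finset.prod_congr rfl fun i hi => by
          rw [Nat.cast_sub (le_of_lt (lt_of_lt_of_le (Finset.mem_range.mp hi) hjm))]
      have e2b : (∏ i ∈ Finset.range (n-j), ((N:ℝ) - m - i))
          = (((N-m).descFactorial (n-j) : ℕ) : ℝ) := by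
        rw [Nat.descFactorial_eq_prod_range, Nat.cast_prod]
        refine Finset.prod_congr rfl fun i hi => ?_
        have hi' : i < n - j := Finset.mem_range.mp hi
        rw [Nat.cast_sub (by omega : i ≤ N - m), Nat.cast_sub hm]
      have e3 : (∏ i ∈ Finset.range m, (α + (i:ℝ))) * (∏ i ∈ Finset.range (n-j), ((m:ℝ) + α + i))
          = ∏ i ∈ Finset.range ((m-j)+n), (α + (i:ℝ)) := by
        rw [show (m-j)+n = m + (n-j) by omega, Finset.prod_range_add]
        congr 1
        exact Finset.prod_congr rfl fun i _ => by push_cast; ring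
      have e4 : (∏ i ∈ Finset.range (N-m), (β + (i:ℝ))) * (∏ i ∈ Finset.range j, (β + (N:ℝ) - m + i))
          = ∏ i ∈ Finset.range (N-(m-j)), (β + (i:ℝ)) := by
        rw [show N-(m-j) = (N-m) + j by omega, Finset.prod_range_add]
        congr 1
        refine Finset.prod_congr rfl fun i _ => ?_
        rw [Nat.cast_add, Nat.cast_sub hm]
        ring
      rw [e1a, e2b]
      rw [← e3, ← e4]
      have hf1 : (m.factorial : ℝ) = ((m-j).factorial : ℝ) * ((m.descFactorial j : ℕ) : ℝ) := by
        rw [← Nat.cast_mul, Nat.factorial_mul_descFactorial hjm]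
      have hf2 : ((N-m).factorial : ℝ)
          = ((N-n-(m-j)).factorial : ℝ) * (((N-m).descFactorial (n-j) : ℕ) : ℝ) := by
        rw [← Nat.cast_mul, show N-n-(m-j) = (N-m)-(n-j) by omega,
          Nat.factorial_mul_descFactorial hnjNm]
      rw [hf1, hf2]
      have h01 : ((m-j).factorial : ℝ) ≠ 0 := Nat.cast_ne_zero.mpr (Nat.factorial_ne_zero _)
      have h02 : ((N-n-(m-j)).factorial : ℝ) ≠ 0 := Nat.cast_ne_zero.mpr (Nat.factorial_ne_zero _)
      have h03 : ((m.descFactorial j : ℕ) : ℝ) ≠ 0 := by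
        rw [Nat.cast_ne_zero, Ne, Nat.descFactorial_eq_zero_iff_lt]
        omega
      have h04 : (((N-m).descFactorial (n-j) : ℕ) : ℝ) ≠ 0 := by
        rw [Nat.cast_ne_zero, Ne, Nat.descFactorial_eq_zero_iff_lt]
        omega
      field_simp
    · rw [gw, if_neg hsup]
      apply mul_eq_zero_of_left
      apply mul_eq_zero_of_right
      refine Finset.prod_eq_zero (Finset.mem_range.mpr (show N - m < n - j by omega)) ?_
      have : ((N:ℝ) - m - ((N-m : ℕ) : ℝ)) = 0 := by
        rw [Nat.cast_sub hm]; ring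
      rw [this, mul_zero]
  · rw [if_neg hjm]
    apply mul_eq_zero_of_left
    apply mul_eq_zero_of_left
    refine Finset.prod_eq_zero (Finset.mem_range.mpr (show m < j by omega)) ?_
    rw [sub_self, zero_mul]

private lemma orth (N n : ℕ) (hnN : n ≤ N) (α β : ℝ) (k : ℕ) (hk : k < n) :
    ∑ m ∈ Finset.range (N+1),
      (∑ j ∈ Finset.range (n+1), (-1:ℝ)^j * (n.choose j : ℝ) *
        (∏ i ∈ Finset.range j, (((m:ℝ)) - i) * (β + (N:ℝ) - m + i)) *
        ∏ i ∈ Finset.range (n-j), (((m:ℝ)) + α + i) * ((N:ℝ) - m - i)) * (m:ℝ)^k *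
      ((∏ i ∈ Finset.range m, (α + (i:ℝ))) * (∏ i ∈ Finset.range (N-m), (β + (i:ℝ)))
        / ((m.factorial:ℝ) * ((N-m).factorial:ℝ))) = 0 := by
  have h1 : ∀ m ∈ Finset.range (N+1),
      (∑ j ∈ Finset.range (n+1), (-1:ℝ)^j * (n.choose j : ℝ) *
        (∏ i ∈ Finset.range j, (((m:ℝ)) - i) * (β + (N:ℝ) - m + i)) *
        ∏ i ∈ Finset.range (n-j), (((m:ℝ)) + α + i) * ((N:ℝ) - m - i)) * (m:ℝ)^k *
      ((∏ i ∈ Finset.range m, (α + (i:ℝ))) * (∏ i ∈ Finset.range (N-m), (β + (i:ℝ)))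
        / ((m.factorial:ℝ) * ((N-m).factorial:ℝ)))
      = ∑ j ∈ Finset.range (n+1), (-1:ℝ)^j * (n.choose j : ℝ)
          * (if j ≤ m then gw N n α β (m-j) else 0) * (m:ℝ)^k := by
    intro m hm
    have hmN : m ≤ N := by simpa [Nat.lt_succ_iff] using hm
    rw [Finset.sum_mul, Finset.sum_mul]
    refine Finset.sum_congr rfl fun j hj => ?_
    have hjn : j ≤ n := by simpa [Nat.lt_succ_iff] using hj
    rw [← pointwise N n hnN α β m hmN j hjn]
    ring
  rw [Finset.sum_congr rfl h1, Finset.sum_comm]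
  have h2 : ∀ j ∈ Finset.range (n+1),
      ∑ m ∈ Finset.range (N+1), (-1:ℝ)^j * (n.choose j : ℝ)
          * (if j ≤ m then gw N n α β (m-j) else 0) * (m:ℝ)^k
      = ∑ i ∈ Finset.range (N-n+1), (-1:ℝ)^j * (n.choose j : ℝ) * gw N n α β i
          * ((i:ℝ) + (j:ℝ))^k := by
    intro j hj
    have hjn : j ≤ n := by simpa [Nat.lt_succ_iff] using hj
    have e : N+1 = j + (N+1-j) := by omega
    rw [e, Finset.sum_range_add]
    have hz : ∑ m ∈ Finset.range j, (-1:ℝ)^j * (n.choose j : ℝ)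
          * (if j ≤ m then gw N n α β (m-j) else 0) * (m:ℝ)^k = 0 := by
      refine Finset.sum_eq_zero fun m hm => ?_
      rw [if_neg (by simpa [Nat.lt_succ_iff] using Nat.not_le.mpr (Finset.mem_range.mp hm))]
      ring
    rw [hz, zero_add]
    have e2 : N+1-j = (N-n+1) + (n-j) := by omega
    rw [e2, Finset.sum_range_add]
    have hz2 : ∑ i ∈ Finset.range (n-j), (-1:ℝ)^j * (n.choose j : ℝ)
        * (if j ≤ j + ((N-n+1) + i) then gw N n α β (j + ((N-n+1) + i) - j) else 0)
        * ((j + ((N-n+1) + i) : ℕ):ℝ)^k = 0 := by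
      refine Finset.sum_eq_zero fun i _ => ?_
      rw [if_pos (by omega), show j + ((N-n+1) + i) - j = (N-n+1)+i by omega,
        gw, if_neg (by omega)]
      ring
    rw [hz2, add_zero]
    refine Finset.sum_congr rfl fun i _ => ?_
    rw [if_pos (by omega), show j + i - j = i by omega]
    push_cast
    ring
  rw [Finset.sum_congr rfl h2, Finset.sum_comm]
  refine Finset.sum_eq_zero fun i _ => ?_
  have := alt_sum_pow n k hk (i:ℝ)
  calc ∑ j ∈ Finset.range (n+1), (-1:ℝ)^j * (n.choose j : ℝ) * gw N n α β i * ((i:ℝ) + (j:ℝ))^k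
      = gw N n α β i * ∑ j ∈ Finset.range (n+1), (-1:ℝ)^j * (n.choose j : ℝ) * ((i:ℝ) + (j:ℝ))^k := by
        rw [Finset.mul_sum]; exact Finset.sum_congr rfl fun j _ => by ring
    _ = 0 := by rw [this, mul_zero]


private def uR (b : ℝ) (j : ℕ) (x : ℝ) : ℝ := ∏ i ∈ Finset.range j, ((x - i) * (b - x + i))
private def vR (c d : ℝ) (r : ℕ) (x : ℝ) : ℝ := ∏ i ∈ Finset.range r, ((x + (c + i)) * ((d - i) - x))
private def SR (N n : ℕ) (α β : ℝ) (m : ℕ) (x : ℝ) : ℝ :=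
  ∑ j ∈ Finset.range (m+1), (-1:ℝ)^j * (m.choose j : ℝ) * uR (β + N) j x * vR (α + n - m) ((N:ℝ) - n + m) (m - j) x

private lemma rv_succ (c d : ℝ) (r : ℕ) (x : ℝ) :
    vR c d (r+1) x = (x + c) * (d - x) * vR (c+1) (d-1) r x := by
  rw [vR, Finset.prod_range_succ' (fun i => (x + (c + (i:ℝ))) * ((d - i) - x)) r]
  rw [mul_comm]
  congr 1
  · norm_num
  · rw [vR]
    exact Finset.prod_congr rfl fun i _ => by push_cast; ring

private lemma rv_shift (c d : ℝ) (r : ℕ) (x : ℝ) :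
    vR c d r (x-1) = vR (c-1) (d+1) r x := by
  rw [vR, vR]
  exact Finset.prod_congr rfl fun i _ => by ring

private lemma ru_succ (b : ℝ) (j : ℕ) (x : ℝ) :
    uR b (j+1) x = uR b j (x-1) * (x * (b - x)) := by
  rw [uR, Finset.prod_range_succ' (fun i => (x - (i:ℝ)) * (b - x + i)) j]
  congr 1
  · rw [uR]
    exact Finset.prod_congr rfl fun i _ => by push_cast; ring
  · norm_num

private lemma SR_succ (N n : ℕ) (α β : ℝ) (m : ℕ) (x : ℝ) :
    SR N n α β (m+1) x
      = (x + (α + n - m - 1)) * (((N:ℝ) - n + m + 1) - x) * SR N n α β m x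
        - x * ((β + N) - x) * SR N n α β m (x-1) := by
  simp only [SR]
  set b : ℝ := β + (N:ℝ) with hb
  set cc : ℝ := α + (n:ℝ) - ((m+1:ℕ):ℝ) with hcc
  set dd : ℝ := (N:ℝ) - (n:ℝ) + ((m+1:ℕ):ℝ) with hdd
  have ecc : cc = α + (n:ℝ) - (m:ℝ) - 1 := by rw [hcc]; push_cast; ring
  have edd : dd = (N:ℝ) - (n:ℝ) + (m:ℝ) + 1 := by rw [hdd]; push_cast; ring
  have hsplit : ∑ j ∈ range (m+1+1), (-1:ℝ)^j * ((m+1).choose j : ℝ) * uR b j x * vR cc dd (m+1-j) x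
      = ((∑ j ∈ range (m+1), -((-1:ℝ)^j * (m.choose j : ℝ) * uR b (j+1) x * vR cc dd (m-j) x))
        + (∑ j ∈ range (m+1), (-1:ℝ)^(j+1) * (m.choose (j+1) : ℝ) * uR b (j+1) x * vR cc dd (m+1-(j+1)) x))
        + uR b 0 x * vR cc dd (m+1) x := by
    rw [Finset.sum_range_succ'
      (fun j => (-1:ℝ)^j * (((m+1).choose j : ℕ) : ℝ) * uR b j x * vR cc dd (m+1-j) x)]
    rw [← Finset.sum_add_distrib]
    congr 1
    · refine Finset.sum_congr rfl fun j hj => ?_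
      rw [Nat.choose_succ_succ', Nat.succ_sub_succ]
      push_cast
      ring
    · norm_num
  have hext : ∑ j ∈ range (m+1+1), (-1:ℝ)^j * (m.choose j : ℝ) * uR b j x * vR cc dd (m+1-j) x
      = ∑ j ∈ range (m+1), (-1:ℝ)^j * (m.choose j : ℝ) * uR b j x * vR cc dd (m+1-j) x := by
    rw [Finset.sum_range_succ]
    simp [Nat.choose_succ_self]
  have hB : (∑ j ∈ range (m+1), (-1:ℝ)^(j+1) * (m.choose (j+1) : ℝ) * uR b (j+1) x * vR cc dd (m+1-(j+1)) x)
        + uR b 0 x * vR cc dd (m+1) x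
      = ∑ j ∈ range (m+1), (-1:ℝ)^j * (m.choose j : ℝ) * uR b j x * vR cc dd (m+1-j) x := by
    rw [← hext, Finset.sum_range_succ'
      (fun j => (-1:ℝ)^j * ((m.choose j : ℕ) : ℝ) * uR b j x * vR cc dd (m+1-j) x) (m+1)]
    norm_num [uR]
  have hT1 : ∑ j ∈ range (m+1), (-1:ℝ)^j * (m.choose j : ℝ) * uR b j x * vR cc dd (m+1-j) x
      = (x + (α + (n:ℝ) - (m:ℝ) - 1)) * (((N:ℝ) - (n:ℝ) + (m:ℝ) + 1) - x)
        * ∑ j ∈ range (m+1), (-1:ℝ)^j * (m.choose j : ℝ) * uR b j x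
            * vR (α + (n:ℝ) - (m:ℝ)) ((N:ℝ) - (n:ℝ) + (m:ℝ)) (m-j) x := by
    rw [Finset.mul_sum]
    refine Finset.sum_congr rfl fun j hj => ?_
    have hjm : j ≤ m := by simpa [Nat.lt_succ_iff] using hj
    rw [show m+1-j = (m-j)+1 by omega, rv_succ, ecc, edd]
    have e1 : α + (n:ℝ) - (m:ℝ) - 1 + 1 = α + (n:ℝ) - (m:ℝ) := by ring
    have e2 : (N:ℝ) - (n:ℝ) + (m:ℝ) + 1 - 1 = (N:ℝ) - (n:ℝ) + (m:ℝ) := by ring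
    rw [e1, e2]
    ring
  have hT2 : ∑ j ∈ range (m+1), -((-1:ℝ)^j * (m.choose j : ℝ) * uR b (j+1) x * vR cc dd (m-j) x)
      = - (x * (b - x)
        * ∑ j ∈ range (m+1), (-1:ℝ)^j * (m.choose j : ℝ) * uR b j (x-1)
            * vR (α + (n:ℝ) - (m:ℝ)) ((N:ℝ) - (n:ℝ) + (m:ℝ)) (m-j) (x-1)) := by
    rw [Finset.mul_sum, ← Finset.sum_neg_distrib]
    refine Finset.sum_congr rfl fun j _ => ?_
    rw [ru_succ]
    have hv : vR (α + (n:ℝ) - (m:ℝ)) ((N:ℝ) - (n:ℝ) + (m:ℝ)) (m-j) (x-1) = vR cc dd (m-j) x := by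
      rw [rv_shift, ecc, edd]
    rw [hv]
    ring
  rw [hsplit, add_assoc, hB, hT1, hT2]
  ring

private noncomputable def uP (b : ℝ) (j : ℕ) : Polynomial ℝ :=
  ∏ i ∈ Finset.range j, ((Polynomial.X - Polynomial.C (i:ℝ)) * (Polynomial.C b - Polynomial.X + Polynomial.C (i:ℝ)))

private noncomputable def vP (c d : ℝ) (r : ℕ) : Polynomial ℝ :=
  ∏ i ∈ Finset.range r, ((Polynomial.X + Polynomial.C (c + (i:ℝ))) * (Polynomial.C (d - (i:ℝ)) - Polynomial.X))

private noncomputable def SP (N n : ℕ) (α β : ℝ) (m : ℕ) : Polynomial ℝ :=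
  ∑ j ∈ Finset.range (m+1), Polynomial.C ((-1:ℝ)^j * (m.choose j : ℝ)) * uP (β + N) j
    * vP (α + (n:ℝ) - (m:ℝ)) ((N:ℝ) - (n:ℝ) + (m:ℝ)) (m - j)

private lemma SP_eval (N n : ℕ) (α β : ℝ) (m : ℕ) (x : ℝ) :
    (SP N n α β m).eval x = SR N n α β m x := by
  simp only [SP, SR, uP, uR, vP, vR, eval_finset_sum, eval_prod, eval_mul, eval_add, eval_sub,
    eval_C, eval_X]

private lemma SP_succ (N n : ℕ) (α β : ℝ) (m : ℕ) :
    SP N n α β (m+1)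
      = (Polynomial.X + Polynomial.C (α + (n:ℝ) - (m:ℝ) - 1))
          * (Polynomial.C ((N:ℝ) - (n:ℝ) + (m:ℝ) + 1) - Polynomial.X) * SP N n α β m
        - Polynomial.X * (Polynomial.C (β + (N:ℝ)) - Polynomial.X)
          * (SP N n α β m).comp (Polynomial.X - Polynomial.C 1) := by
  apply Polynomial.funext
  intro x
  have hc : ((m+1:ℕ):ℝ) = (m:ℝ) + 1 := by push_cast; ring
  simp only [eval_sub, eval_mul, eval_add, eval_X, eval_C, eval_comp]
  rw [SP_eval, SP_eval, SP_eval]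
  have := SR_succ N n α β m x
  rw [this]

private lemma comp_coeff (p : Polynomial ℝ) (m : ℕ) (h : p.natDegree ≤ m) (q : ℕ) :
    (p.comp (Polynomial.X - Polynomial.C 1)).coeff q
      = ∑ i ∈ Finset.range (m+1), p.coeff i * (-1:ℝ)^(i-q) * (i.choose q : ℝ) := by
  have hX : (Polynomial.X - Polynomial.C 1 : Polynomial ℝ) = Polynomial.X + Polynomial.C (-1) := by
    rw [map_neg]; ring
  conv_lhs => rw [p.as_sum_range' (m+1) (Nat.lt_succ_of_le h), hX]
  rw [← Polynomial.coe_compRingHom_apply, map_sum, Polynomial.finset_sum_coeff]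
  refine Finset.sum_congr rfl fun i _ => ?_
  rw [Polynomial.coe_compRingHom_apply, Polynomial.monomial_comp, Polynomial.coeff_C_mul,
    Polynomial.coeff_X_add_C_pow]
  ring

private lemma comp_coeff_top (p : Polynomial ℝ) (m : ℕ) (h : p.natDegree ≤ m) :
    (p.comp (Polynomial.X - Polynomial.C 1)).coeff m = p.coeff m := by
  rw [comp_coeff p m h m, Finset.sum_range_succ]
  have hz : ∑ i ∈ Finset.range m, p.coeff i * (-1:ℝ)^(i-m) * (i.choose m : ℝ) = 0 :=
    Finset.sum_eq_zero fun i hi => by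
      rw [Nat.choose_eq_zero_of_lt (Finset.mem_range.mp hi)]; simp
  rw [hz, zero_add, Nat.sub_self, pow_zero, Nat.choose_self]
  norm_num

private lemma comp_coeff_sub (p : Polynomial ℝ) (m : ℕ) (h : p.natDegree ≤ m+1) :
    (p.comp (Polynomial.X - Polynomial.C 1)).coeff m
      = p.coeff m - ((m:ℝ)+1) * p.coeff (m+1) := by
  rw [comp_coeff p (m+1) h m, Finset.sum_range_succ, Finset.sum_range_succ]
  have hz : ∑ i ∈ Finset.range m, p.coeff i * (-1:ℝ)^(i-m) * (i.choose m : ℝ) = 0 :=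
    Finset.sum_eq_zero fun i hi => by
      rw [Nat.choose_eq_zero_of_lt (Finset.mem_range.mp hi)]; simp
  rw [hz, zero_add, Nat.sub_self, pow_zero, Nat.choose_self,
    show m+1-m = 1 by omega, Nat.choose_succ_self_right]
  push_cast
  ring

private lemma step_coeff (a₁ a₂ bb : ℝ) (p : Polynomial ℝ) (m : ℕ) (hd : p.natDegree ≤ m) :
    ((Polynomial.X + Polynomial.C a₁) * (Polynomial.C a₂ - Polynomial.X) * p
      - Polynomial.X * (Polynomial.C bb - Polynomial.X)
          * (p.comp (Polynomial.X - Polynomial.C 1))).natDegree ≤ m+1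
    ∧ ((Polynomial.X + Polynomial.C a₁) * (Polynomial.C a₂ - Polynomial.X) * p
      - Polynomial.X * (Polynomial.C bb - Polynomial.X)
          * (p.comp (Polynomial.X - Polynomial.C 1))).coeff (m+1)
      = (a₂ - a₁ - bb - (m:ℝ)) * p.coeff m := by
  set q := p.comp (Polynomial.X - Polynomial.C 1) with hq
  have hqd : q.natDegree ≤ m := by
    rw [hq, Polynomial.natDegree_comp, Polynomial.natDegree_X_sub_C, mul_one]
    exact hd
  have hA : (Polynomial.X + Polynomial.C a₁) * (Polynomial.C a₂ - Polynomial.X) * p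
      = Polynomial.C (a₁*a₂) * p + Polynomial.C (a₂ - a₁) * (p * Polynomial.X)
        - p * Polynomial.X^2 := by
    rw [map_mul, map_sub]; ring
  have hB : Polynomial.X * (Polynomial.C bb - Polynomial.X) * q
      = Polynomial.C bb * (q * Polynomial.X) - q * Polynomial.X^2 := by
    ring
  have hp1 : p.coeff (m+1) = 0 := Polynomial.coeff_eq_zero_of_natDegree_lt (by omega)
  have hp2 : p.coeff (m+2) = 0 := Polynomial.coeff_eq_zero_of_natDegree_lt (by omega)
  have hq1 : q.coeff (m+1) = 0 := Polynomial.coeff_eq_zero_of_natDegree_lt (by omega)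
  have hq2 : q.coeff (m+2) = 0 := Polynomial.coeff_eq_zero_of_natDegree_lt (by omega)
  have hqm : q.coeff m = p.coeff m := comp_coeff_top p m hd
  -- coeff at m+2
  have c2 : ((Polynomial.X + Polynomial.C a₁) * (Polynomial.C a₂ - Polynomial.X) * p
      - Polynomial.X * (Polynomial.C bb - Polynomial.X) * q).coeff (m+2) = 0 := by
    rw [Polynomial.coeff_sub, hA, hB, Polynomial.coeff_sub, Polynomial.coeff_sub,
      Polynomial.coeff_add, Polynomial.coeff_C_mul, Polynomial.coeff_C_mul,
      Polynomial.coeff_C_mul, show m+2 = (m+1)+1 from rfl, Polynomial.coeff_mul_X,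
      Polynomial.coeff_mul_X, show (m+1)+1 = m+2 from rfl,
      Polynomial.coeff_mul_X_pow p 2 m, Polynomial.coeff_mul_X_pow q 2 m,
      hp1, hp2, hq1, hqm]
    ring
  -- coeff at m+1
  have c1 : ((Polynomial.X + Polynomial.C a₁) * (Polynomial.C a₂ - Polynomial.X) * p
      - Polynomial.X * (Polynomial.C bb - Polynomial.X) * q).coeff (m+1)
      = (a₂ - a₁ - bb - (m:ℝ)) * p.coeff m := by
    rw [Polynomial.coeff_sub, hA, hB, Polynomial.coeff_sub, Polynomial.coeff_sub,
      Polynomial.coeff_add, Polynomial.coeff_C_mul, Polynomial.coeff_C_mul,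
      Polynomial.coeff_C_mul, Polynomial.coeff_mul_X,
      Polynomial.coeff_mul_X, Polynomial.coeff_mul_X_pow', Polynomial.coeff_mul_X_pow',
      hp1, hqm]
    rcases Nat.eq_zero_or_pos m with hm0 | hmpos
    · subst hm0
      norm_num
      ring
    · obtain ⟨s, rfl⟩ : ∃ s, m = s + 1 := ⟨m-1, by omega⟩
      rw [if_pos (by omega : 2 ≤ s+1+1), if_pos (by omega : 2 ≤ s+1+1),
        show s+1+1-2 = s from by omega, hq, comp_coeff_sub p s (by omega)]
      push_cast
      ring
  refine ⟨?_, c1⟩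
  rw [Polynomial.natDegree_le_iff_coeff_eq_zero]
  intro d hd'
  rcases eq_or_lt_of_le (show m+2 ≤ d by omega) with h | h
  · rw [← h]; exact c2
  · have h1 : (Polynomial.X + Polynomial.C a₁ : Polynomial ℝ).natDegree ≤ 1 :=
      le_of_eq (Polynomial.natDegree_X_add_C _)
    have h2 : (Polynomial.C a₂ - Polynomial.X : Polynomial ℝ).natDegree ≤ 1 :=
      le_trans (Polynomial.natDegree_sub_le _ _) (by simp)
    have h3 : (Polynomial.C bb - Polynomial.X : Polynomial ℝ).natDegree ≤ 1 :=
      le_trans (Polynomial.natDegree_sub_le _ _) (by simp)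
    have hApd : ((Polynomial.X + Polynomial.C a₁) * (Polynomial.C a₂ - Polynomial.X)
        * p).natDegree ≤ m+2 := by
      refine le_trans (Polynomial.natDegree_mul_le) ?_
      have := le_trans (Polynomial.natDegree_mul_le
        (p := (Polynomial.X + Polynomial.C a₁ : Polynomial ℝ))
        (q := (Polynomial.C a₂ - Polynomial.X : Polynomial ℝ))) (add_le_add h1 h2)
      omega
    have hBqd : (Polynomial.X * (Polynomial.C bb - Polynomial.X) * q).natDegree ≤ m+2 := by
      refine le_trans (Polynomial.natDegree_mul_le) ?_
      have := le_trans (Polynomial.natDegree_mul_le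
        (p := (Polynomial.X : Polynomial ℝ))
        (q := (Polynomial.C bb - Polynomial.X : Polynomial ℝ)))
        (add_le_add Polynomial.natDegree_X_le h3)
      omega
    have : ((Polynomial.X + Polynomial.C a₁) * (Polynomial.C a₂ - Polynomial.X) * p
      - Polynomial.X * (Polynomial.C bb - Polynomial.X) * q).natDegree ≤ m+2 :=
      le_trans (Polynomial.natDegree_sub_le _ _) (by omega)
    exact Polynomial.coeff_eq_zero_of_natDegree_lt (lt_of_le_of_lt this h)

private lemma SP_deg (N n : ℕ) (α β : ℝ) : ∀ m : ℕ,
    (SP N n α β m).natDegree ≤ m ∧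
    (SP N n α β m).coeff m = ∏ i ∈ Finset.range m, (-(α + β + 2*(n:ℝ) - 2 - (i:ℝ))) := by
  intro m
  induction m with
  | zero =>
    have h0 : SP N n α β 0 = 1 := by simp [SP, uP, vP]
    rw [h0]; simp
  | succ m ih =>
    rw [SP_succ]
    have hstep := step_coeff (α + (n:ℝ) - (m:ℝ) - 1) ((N:ℝ) - (n:ℝ) + (m:ℝ) + 1) (β + (N:ℝ))
      (SP N n α β m) m ih.1
    refine ⟨hstep.1, ?_⟩
    rw [hstep.2, ih.2, Finset.prod_range_succ]
    ring

/-- The Hahn case of the paper's Proposition: the polynomial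
`Q(x) = Σ_{j=0}^{n} (−1)^j C(n,j) Π_{i=0}^{j−1}[(x−i)(β+N−x+i)] Π_{i=0}^{n−j−1}[(x+α+i)(N−x−i)]`
collapses to degree exactly `n` and is orthogonal to `x^k`, `k < n`, with respect to the
Hahn weight `(α)_m(β)_{N−m}/(m!(N−m)!)` on `{0,…,N}`. -/
theorem stmt_4 (N n : ℕ) (hnN : n ≤ N) (α β : ℝ)
    (hα : ∀ m : ℤ, 0 ≤ m → m ≤ (N : ℤ) - 1 → α ≠ -(m : ℝ))
    (hβ : ∀ m : ℤ, 0 ≤ m → m ≤ (N : ℤ) - 1 → β ≠ -(m : ℝ))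
    (hαβ : ∀ m : ℤ, 0 ≤ m → m ≤ 2 * (N : ℤ) - 2 → α + β ≠ -(m : ℝ)) (Q : ℝ → ℝ)
    (hQ : ∀ x : ℝ, Q x = ∑ j ∈ Finset.range (n + 1),
      (-1 : ℝ) ^ j * (n.choose j : ℝ) *
        (∏ i ∈ Finset.range j, ((x - (i : ℝ)) * (β + (N : ℝ) - x + (i : ℝ)))) *
        ∏ i ∈ Finset.range (n - j), ((x + α + (i : ℝ)) * ((N : ℝ) - x - (i : ℝ)))) :
    (∃ p : Polynomial ℝ, p.degree = (n : ℕ) ∧ ∀ x : ℝ, Q x = p.eval x) ∧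
    (∀ k : ℕ, k < n →
      ∑ m ∈ Finset.range (N + 1),
        Q m * (m : ℝ) ^ k *
          ((∏ i ∈ Finset.range m, (α + (i : ℝ))) *
            (∏ i ∈ Finset.range (N - m), (β + (i : ℝ))) /
              ((m.factorial : ℝ) * ((N - m).factorial : ℝ))) = 0) := by
  constructor
  · refine ⟨SP N n α β n, ?_, ?_⟩
    · obtain ⟨hdeg, hcoeff⟩ := SP_deg N n α β n
      have hne : (SP N n α β n).coeff n ≠ 0 := by
        rw [hcoeff]
        apply Finset.prod_ne_zero_iff.mpr
        intro i hi
        have hin : i < n := Finset.mem_range.mp hi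
        have h2 := hαβ (2*(n:ℤ)-2-(i:ℤ)) (by omega) (by omega)
        intro hzero
        apply h2
        have h3 : α + β = -(2*(n:ℝ) - 2 - (i:ℝ)) := by linarith [neg_eq_zero.mp hzero]
        rw [h3]
        push_cast
        ring
      have hnat : (SP N n α β n).natDegree = n :=
        le_antisymm hdeg (Polynomial.le_natDegree_of_ne_zero hne)
      have hpne : SP N n α β n ≠ 0 := fun h => hne (by simp [h])
      rw [Polynomial.degree_eq_natDegree hpne, hnat]
    · intro x
      rw [hQ x, SP_eval, SR]
      refine Finset.sum_congr rfl fun j _ => ?_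
      rw [uR, vR]
      have hv : ∏ i ∈ Finset.range (n-j), ((x + α + (i:ℝ)) * ((N:ℝ) - x - (i:ℝ)))
          = ∏ i ∈ Finset.range (n-j),
              ((x + (α + (n:ℝ) - (n:ℝ) + (i:ℝ))) * (((N:ℝ) - (n:ℝ) + (n:ℝ) - (i:ℝ)) - x)) :=
        Finset.prod_congr rfl fun i _ => by ring
      rw [hv]
  · intro k hk
    have horth := orth N n hnN α β k hk
    rw [← horth]
    refine Finset.sum_congr rfl fun m _ => ?_
    rw [hQ m]
end

section
/- Fix r ≥ 1, n ∈ ℕ, B ∈ ℝ with B ≠ 0, and real numbers γ_1, …, γ_r such that γ_j − γ_k is not an integer whenever j ≠ k. Define P : ℝ → ℝ by P(x) = Σ_{j=0}^{n} (−1)^j C(n,j) B^(−j) · Π_{k=1}^{r} Π_{i=0}^{j−1} (x − γ_k − i). Then: (i) P is the evaluation of a real polynomial of degree exactly r·n; (ii) for every index l ∈ {1,…,r} and every natural number k < n, the series Σ_{m=0}^{∞} P(γ_l + m) · (γ_l + m)^k · B^m · Π_{k'=1}^{r} (1/Γ(m + γ_l − γ_{k'} + 1)) converges and has sum 0. -/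
open Finset Filter

open Finset

lemma gammaKey (x : ℝ) (j : ℕ) :
    (∏ i ∈ Finset.range j, (x - i)) * (Real.Gamma (x + 1))⁻¹
      = (Real.Gamma (x + 1 - j))⁻¹ := by
  induction j with
  | zero => simp
  | succ j ih =>
      rw [Finset.prod_range_succ, mul_comm (∏ i ∈ Finset.range j, (x - i)) (x - j),
        mul_assoc, ih]
      have : x + 1 - (j + 1 : ℕ) = (x - j - 1) + 1 - 0 := by push_cast; ring
      rw [this]
      set y : ℝ := x - j with hy
      -- goal: y * (Real.Gamma (x + 1 - j))⁻¹ = (Real.Gamma (y - 1 + 1 - 0))⁻¹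
      have h1 : x + 1 - (j : ℝ) = y + 1 := by rw [hy]; ring
      have h2 : y - 1 + 1 - 0 = y := by ring
      rw [h1, h2]
      by_cases hy0 : y = 0
      · simp [hy0, Real.Gamma_zero]
      · rw [Real.Gamma_add_one hy0, mul_inv, ← mul_assoc, mul_inv_cancel₀ hy0, one_mul]

lemma altSum (f : ℕ → ℝ) (n : ℕ) :
    ∑ j ∈ range (n + 2), (-1 : ℝ) ^ j * ((n + 1).choose j : ℝ) * f j
      = ∑ j ∈ range (n + 1), (-1 : ℝ) ^ j * (n.choose j : ℝ) * (f j - f (j + 1)) := by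
  have h1 : ∑ j ∈ range (n + 2), (-1 : ℝ) ^ j * ((n + 1).choose j : ℝ) * f j
      = ∑ j ∈ range (n + 1), (-1 : ℝ) ^ (j+1) * ((n.choose j : ℝ) + (n.choose (j+1) : ℝ)) * f (j+1)
        + f 0 := by
    rw [Finset.sum_range_succ' (fun j => (-1 : ℝ) ^ j * ((n + 1).choose j : ℝ) * f j) (n+1)]
    simp [Nat.choose_succ_succ]
  have h2 : ∑ j ∈ range (n + 1), (-1 : ℝ) ^ (j+1) * (n.choose (j+1) : ℝ) * f (j+1)
      = ∑ j ∈ range (n + 2), (-1 : ℝ) ^ j * (n.choose j : ℝ) * f j - f 0 := by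
    rw [Finset.sum_range_succ' (fun j => (-1 : ℝ) ^ j * (n.choose j : ℝ) * f j) (n+1)]
    simp
  have h3 : ∑ j ∈ range (n + 2), (-1 : ℝ) ^ j * (n.choose j : ℝ) * f j
      = ∑ j ∈ range (n + 1), (-1 : ℝ) ^ j * (n.choose j : ℝ) * f j := by
    rw [Finset.sum_range_succ]
    simp [Nat.choose_succ_self]
  rw [h1]
  have : ∀ j, (-1 : ℝ) ^ (j+1) * ((n.choose j : ℝ) + (n.choose (j+1) : ℝ)) * f (j+1)
      = (-1 : ℝ) ^ (j+1) * (n.choose j : ℝ) * f (j+1) + (-1 : ℝ) ^ (j+1) * (n.choose (j+1) : ℝ) * f (j+1) := by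
    intro j; ring
  simp_rw [this, Finset.sum_add_distrib, h2, h3]
  rw [show ∀ a b c : ℝ, a + (b - c) + c = b + a from by intros; ring]
  rw [← Finset.sum_add_distrib]
  apply Finset.sum_congr rfl; intro j _; ring

lemma diffZero : ∀ (n k : ℕ), k < n → ∀ y : ℝ,
    ∑ j ∈ range (n + 1), (-1 : ℝ) ^ j * (n.choose j : ℝ) * (y + j) ^ k = 0 := by
  intro n
  induction n with
  | zero => intro k hk; omega
  | succ n ih =>
      intro k hk y
      have h := altSum (fun j => (y + j) ^ k) n
      rw [show n + 1 + 1 = n + 2 from rfl, h]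
      have hd : ∀ j : ℕ, (y + j) ^ k - (y + (((j + 1) : ℕ) : ℝ)) ^ k
          = -∑ i ∈ range k, (k.choose i : ℝ) * (y + j) ^ i := by
        intro j
        have hb : (y + (j:ℝ) + 1) ^ k = ∑ i ∈ range (k + 1), (y + j) ^ i * (k.choose i : ℝ) := by
          rw [add_pow]
          simp
        push_cast
        rw [show y + ((j:ℝ) + 1) = y + (j:ℝ) + 1 from by ring, hb, Finset.sum_range_succ]
        simp
        exact Finset.sum_congr rfl fun i _ => mul_comm _ _
      rw [Finset.sum_congr rfl (fun j _ => by rw [hd j])]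
      have : ∀ j ∈ range (n+1), (-1:ℝ)^j * (n.choose j : ℝ) * -∑ i ∈ range k, (k.choose i : ℝ) * (y + j) ^ i
          = -∑ i ∈ range k, (k.choose i : ℝ) * ((-1:ℝ)^j * (n.choose j : ℝ) * (y + j) ^ i) := by
        intro j _
        rw [mul_neg, neg_inj, Finset.mul_sum]
        apply Finset.sum_congr rfl; intro i _; ring
      rw [Finset.sum_congr rfl this, Finset.sum_neg_distrib, Finset.sum_comm]
      apply neg_eq_zero.mpr
      apply Finset.sum_eq_zero
      intro i hi
      rw [← Finset.mul_sum, ih i (by simp at hi; omega) y, mul_zero]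

set_option maxHeartbeats 1000000 in
lemma summableMaster {r : ℕ} (hr : 1 ≤ r) (B : ℝ) (hB : B ≠ 0) (c : Fin r → ℝ)
    (hc : ∀ k' : Fin r, ∀ s : ℕ, ((s : ℝ) + c k' + 1 ≠ 0 ∧ Real.Gamma ((s : ℝ) + c k' + 1) ≠ 0))
    (k : ℕ) :
    Summable (fun s : ℕ => ((1 : ℝ) + s) ^ k *
      |B ^ s * ∏ k' : Fin r, (Real.Gamma ((s : ℝ) + c k' + 1))⁻¹|) := by
  set f : ℕ → ℝ := fun s => ((1 : ℝ) + s) ^ k *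
      |B ^ s * ∏ k' : Fin r, (Real.Gamma ((s : ℝ) + c k' + 1))⁻¹| with hf
  set R : ℕ → ℝ := fun s => (((2 : ℝ) + s) / (1 + s)) ^ k * |B| *
      ∏ k' : Fin r, |(s : ℝ) + c k' + 1|⁻¹ with hR
  have hs1 : ∀ s : ℕ, (0:ℝ) < 1 + s := fun s => by positivity
  have hfpos : ∀ s, 0 < f s := by
    intro s
    apply mul_pos (by positivity)
    rw [abs_pos]
    apply mul_ne_zero (pow_ne_zero _ hB)
    exact Finset.prod_ne_zero_iff.mpr fun k' _ => inv_ne_zero (hc k' s).2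
  have hrec : ∀ s : ℕ, f (s + 1) = R s * f s := by
    intro s
    have hg : ∀ k' : Fin r, Real.Gamma (((s+1 : ℕ) : ℝ) + c k' + 1)
        = ((s : ℝ) + c k' + 1) * Real.Gamma ((s : ℝ) + c k' + 1) := by
      intro k'
      have : ((s+1 : ℕ) : ℝ) + c k' + 1 = ((s : ℝ) + c k' + 1) + 1 := by push_cast; ring
      rw [this, Real.Gamma_add_one (hc k' s).1]
    simp only [hf, hR]
    rw [Finset.prod_congr rfl (fun k' _ => by rw [hg k'])]
    push_cast
    rw [show (1:ℝ) + ((s:ℝ)+1) = 2 + (s:ℝ) by ring]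
    simp only [mul_inv, Finset.prod_mul_distrib, abs_mul, Finset.abs_prod, abs_inv, pow_succ]
    have h2 : ((2:ℝ) + s) ^ k = ((2 + (s:ℝ)) / (1 + s)) ^ k * (1 + (s:ℝ)) ^ k := by
      rw [div_pow, div_mul_cancel₀]
      exact pow_ne_zero _ (hs1 s).ne'
    rw [h2]; ring
  have hinv : Tendsto (fun s : ℕ => ((1:ℝ) + s)⁻¹) atTop (nhds 0) :=
    (tendsto_atTop_add_const_left atTop 1 tendsto_natCast_atTop_atTop).inv_tendsto_atTop
  have h1 : Tendsto (fun s : ℕ => ((2:ℝ) + s) / (1 + s)) atTop (nhds 1) := by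
    have heq : (fun s : ℕ => ((2:ℝ) + s) / (1 + s)) = fun s : ℕ => 1 + ((1:ℝ) + s)⁻¹ := by
      funext s; field_simp; ring
    rw [heq]
    simpa using tendsto_const_nhds.add hinv
  have hpow : Tendsto (fun s : ℕ => (((2:ℝ) + s) / (1 + s)) ^ k) atTop (nhds 1) := by
    simpa using h1.pow k
  have hfac : ∀ k' : Fin r, Tendsto (fun s : ℕ => |(s : ℝ) + c k' + 1|⁻¹) atTop (nhds 0) := by
    intro k'
    apply Filter.Tendsto.inv_tendsto_atTop
    apply tendsto_abs_atTop_atTop.comp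
    apply tendsto_atTop_add_const_right
    exact tendsto_atTop_add_const_right _ _ tendsto_natCast_atTop_atTop
  have hprod : Tendsto (fun s : ℕ => ∏ k' : Fin r, |(s : ℝ) + c k' + 1|⁻¹) atTop (nhds 0) := by
    have := tendsto_finset_prod (f := fun (k' : Fin r) (s : ℕ) => |(s : ℝ) + c k' + 1|⁻¹)
      (a := fun _ => (0:ℝ)) Finset.univ (fun k' _ => hfac k')
    simpa [Finset.prod_const, zero_pow (by omega : r ≠ 0)] using this
  have htend : Tendsto R atTop (nhds 0) := by
    have := (hpow.mul (tendsto_const_nhds (x := |B|))).mul hprod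
    simpa only [one_mul, mul_zero] using this
  have hne : ∀ᶠ s in atTop, f s ≠ 0 := Filter.Eventually.of_forall fun s => (hfpos s).ne'
  have hratio : Tendsto (fun s => ‖f (s+1)‖ / ‖f s‖) atTop (nhds 0) := by
    have heq : (fun s => ‖f (s+1)‖ / ‖f s‖) = R := by
      funext s
      rw [Real.norm_of_nonneg (hfpos _).le, Real.norm_of_nonneg (hfpos _).le, hrec s,
        mul_div_assoc, div_self (hfpos s).ne', mul_one]
    rw [heq]; exact htend
  exact summable_of_ratio_test_tendsto_lt_one (by norm_num) hne hratio




/-- The paper's main Theorem specialized to a product of `r` Charlier weights on shifted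
lattices `γ_k + ℤ₊`: the Rodrigues polynomial
`P(x) = Σ_{j=0}^{n} (−1)^j C(n,j) B^(−j) Π_{k=1}^{r} Π_{i=0}^{j−1} (x − γ_k − i)`
has degree exactly `r·n` and satisfies the multiple orthogonality relations. -/
theorem stmt_5 (r : ℕ) (hr : 1 ≤ r) (n : ℕ) (B : ℝ) (hB : B ≠ 0) (γ : Fin r → ℝ)
    (hγ : ∀ j k : Fin r, j ≠ k → ∀ z : ℤ, γ j - γ k ≠ (z : ℝ)) (P : ℝ → ℝ)
    (hP : ∀ x : ℝ, P x = ∑ j ∈ Finset.range (n + 1),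
      (-1 : ℝ) ^ j * (n.choose j : ℝ) * B ^ (-(j : ℤ)) *
        ∏ k : Fin r, ∏ i ∈ Finset.range j, (x - γ k - (i : ℝ))) :
    (∃ p : Polynomial ℝ, p.degree = (r * n : ℕ) ∧ ∀ x : ℝ, P x = p.eval x) ∧
    (∀ l : Fin r, ∀ k : ℕ, k < n →
      HasSum (fun m : ℕ =>
        P (γ l + m) * (γ l + m) ^ k * B ^ m *
          ∏ k' : Fin r, (1 / Real.Gamma ((m : ℝ) + γ l - γ k' + 1))) 0) := by
  constructor
  · classical
    set term : ℕ → Polynomial ℝ := fun j =>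
      Polynomial.C ((-1:ℝ)^j * (n.choose j : ℝ) * B ^ (-(j:ℤ))) *
        ∏ k : Fin r, ∏ i ∈ Finset.range j, (Polynomial.X - Polynomial.C (γ k + (i:ℝ)))
      with hterm
    have hmon : ∀ j, (∏ k : Fin r, ∏ i ∈ Finset.range j,
        (Polynomial.X - Polynomial.C (γ k + (i:ℝ)))).Monic := by
      intro j
      apply Polynomial.monic_prod_of_monic
      intro k _
      exact Polynomial.monic_prod_of_monic _ _ fun i _ => Polynomial.monic_X_sub_C _
    have hdeg : ∀ j, (∏ k : Fin r, ∏ i ∈ Finset.range j,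
        (Polynomial.X - Polynomial.C (γ k + (i:ℝ)))).natDegree = r * j := by
      intro j
      rw [Polynomial.natDegree_prod]
      · rw [Finset.sum_congr rfl (fun k _ => Polynomial.natDegree_prod _ _
          (fun i _ => Polynomial.X_sub_C_ne_zero _))]
        rw [Finset.sum_congr rfl (fun k _ => Finset.sum_congr rfl
          (fun i _ => Polynomial.natDegree_X_sub_C _))]
        simp [Finset.sum_const, Finset.card_range, Finset.card_univ, mul_comm]
      · intro k _
        exact (Polynomial.monic_prod_of_monic _ _ fun i _ => Polynomial.monic_X_sub_C _).ne_zero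
    have hcoef : ((-1:ℝ)^n * (n.choose n : ℝ) * B ^ (-(n:ℤ))) ≠ 0 := by
      apply mul_ne_zero (mul_ne_zero (pow_ne_zero _ (by norm_num)) ?_) (zpow_ne_zero _ hB)
      simp [Nat.choose_self]
    have htermdeg : (term n).degree = (r * n : ℕ) := by
      rw [hterm]
      simp only
      rw [(hmon n).degree_mul, Polynomial.degree_C hcoef, zero_add,
        Polynomial.degree_eq_natDegree (hmon n).ne_zero, hdeg n]
    refine ⟨∑ j ∈ Finset.range (n+1), term j, ?_, ?_⟩
    · rw [Finset.sum_range_succ]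
      rw [Polynomial.degree_add_eq_right_of_degree_lt, htermdeg]
      rw [htermdeg]
      apply lt_of_le_of_lt (Polynomial.degree_sum_le _ _)
      rw [Finset.sup_lt_iff (by exact WithBot.bot_lt_coe _)]
      intro j hj
      apply lt_of_le_of_lt (Polynomial.degree_mul_le _ _)
      have h1 : (Polynomial.C ((-1:ℝ)^j * (n.choose j : ℝ) * B ^ (-(j:ℤ)))).degree ≤ 0 :=
        Polynomial.degree_C_le
      have h2 : (∏ k : Fin r, ∏ i ∈ Finset.range j,
          (Polynomial.X - Polynomial.C (γ k + (i:ℝ)))).degree = ((r * j : ℕ) : WithBot ℕ) := by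
        rw [Polynomial.degree_eq_natDegree (hmon j).ne_zero, hdeg j]
      calc (Polynomial.C ((-1:ℝ)^j * (n.choose j : ℝ) * B ^ (-(j:ℤ)))).degree +
            (∏ k : Fin r, ∏ i ∈ Finset.range j,
              (Polynomial.X - Polynomial.C (γ k + (i:ℝ)))).degree
          ≤ (0 : WithBot ℕ) + (((r * j : ℕ) : WithBot ℕ)) := add_le_add h1 h2.le
        _ = ((r * j : ℕ) : WithBot ℕ) := zero_add _
        _ < ((r * n : ℕ) : WithBot ℕ) := by
            rw [Nat.cast_lt]
            exact mul_lt_mul_of_pos_left (Finset.mem_range.mp hj) (by omega : 0 < r)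
    · intro x
      rw [hP x, Polynomial.eval_finset_sum]
      apply Finset.sum_congr rfl
      intro j _
      rw [hterm]
      simp only
      rw [Polynomial.eval_mul, Polynomial.eval_C, Polynomial.eval_prod]
      congr 1
      apply Finset.prod_congr rfl
      intro k _
      rw [Polynomial.eval_prod]
      apply Finset.prod_congr rfl
      intro i _
      simp only [Polynomial.eval_sub, Polynomial.eval_X, Polynomial.eval_C]
      ring
  · intro l k hk
    set a := γ l with ha
    set V : ℝ → ℝ := fun t => ∏ k' : Fin r, (Real.Gamma (t - γ k' + 1))⁻¹ with hV0
    set c : Fin r → ℝ := fun k' => a - γ k' with hc0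
    have hc : ∀ k' : Fin r, ∀ s : ℕ,
        ((s : ℝ) + c k' + 1 ≠ 0 ∧ Real.Gamma ((s : ℝ) + c k' + 1) ≠ 0) := by
      intro k' s
      by_cases hkl : k' = l
      · subst hkl
        have he : (s:ℝ) + c k' + 1 = (s:ℝ) + 1 := by simp [hc0, ha]
        rw [he]
        refine ⟨by positivity, (Real.Gamma_pos_of_pos (by positivity)).ne'⟩
      · have hne : ∀ z : ℤ, c k' ≠ (z:ℝ) := by
          intro z
          simp only [hc0, ha]
          exact hγ l k' (fun h => hkl h.symm) z
        constructor
        · intro h0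
          apply hne (-(s:ℤ)-1)
          push_cast
          linarith
        · apply Real.Gamma_ne_zero
          intro m hm
          apply hne (-(s:ℤ)-(m:ℤ)-1)
          push_cast
          linarith
    have hkey : ∀ (m j : ℕ),
        (∏ k' : Fin r, ∏ i ∈ Finset.range j, (a + (m:ℝ) - γ k' - i)) * V (a + m)
          = V (a + (m:ℝ) - j) := by
      intro m j
      simp only [hV0]
      rw [← Finset.prod_mul_distrib]
      apply Finset.prod_congr rfl
      intro k' _
      have hg := gammaKey (a + (m:ℝ) - γ k') j
      rw [show a + (m:ℝ) - γ k' + 1 - (j:ℝ) = a + (m:ℝ) - (j:ℝ) - γ k' + 1 by ring] at hg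
      exact hg
    have hzero : ∀ (j m : ℕ), m < j → V (a + (m:ℝ) - j) = 0 := by
      intro j m hmj
      simp only [hV0]
      apply Finset.prod_eq_zero (Finset.mem_univ l)
      have harg : a + (m:ℝ) - (j:ℝ) - γ l + 1 = -(((j - (m+1) : ℕ) : ℝ)) := by
        rw [ha, Nat.cast_sub (by omega : m + 1 ≤ j)]
        push_cast
        ring
      rw [harg, Real.Gamma_neg_nat_eq_zero, inv_zero]
    have hVs : ∀ s : ℕ, (∏ k' : Fin r, (Real.Gamma ((s:ℝ) + c k' + 1))⁻¹) = V (a + s) := by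
      intro s
      simp only [hV0]
      apply Finset.prod_congr rfl
      intro k' _
      have he : (s:ℝ) + c k' + 1 = a + (s:ℝ) - γ k' + 1 := by simp only [hc0]; ring
      rw [he]
    have hVm : ∀ m : ℕ,
        (∏ k' : Fin r, (1 / Real.Gamma ((m:ℝ) + a - γ k' + 1))) = V (a + m) := by
      intro m
      simp only [hV0]
      apply Finset.prod_congr rfl
      intro k' _
      rw [one_div, show (m:ℝ) + a - γ k' + 1 = a + (m:ℝ) - γ k' + 1 by ring]
    have hw' : Summable (fun s : ℕ => ((1:ℝ) + s)^k * |B^s * V (a + s)|) := by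
      have hw := summableMaster hr B hB c hc k
      simpa only [hVs] using hw
    have usum : ∀ j : ℕ, Summable (fun s : ℕ => (a + (j:ℝ) + s)^k * (B^s * V (a + s))) := by
      intro j
      apply Summable.of_norm_bounded (hw'.mul_left ((|a| + (j:ℝ) + 1)^k))
      intro s
      rw [Real.norm_eq_abs, abs_mul, abs_pow]
      calc |a + (j:ℝ) + s|^k * |B^s * V (a + s)|
          ≤ ((|a| + (j:ℝ) + 1) * (1 + s))^k * |B^s * V (a + s)| := by
            apply mul_le_mul_of_nonneg_right _ (abs_nonneg _)
            apply pow_le_pow_left₀ (abs_nonneg _)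
            calc |a + (j:ℝ) + s| ≤ |a| + |(j:ℝ)| + |(s:ℝ)| := abs_add_three _ _ _
              _ = |a| + (j:ℝ) + (s:ℝ) := by
                  rw [Nat.abs_cast, Nat.abs_cast]
              _ ≤ (|a| + (j:ℝ) + 1) * (1 + s) := by
                  nlinarith [abs_nonneg a, Nat.cast_nonneg (α := ℝ) j,
                    Nat.cast_nonneg (α := ℝ) s]
        _ = (|a| + (j:ℝ) + 1)^k * (((1:ℝ) + s)^k * |B^s * V (a + s)|) := by
            rw [mul_pow]; ring
    set g : ℕ → ℕ → ℝ := fun j m => (-1:ℝ)^j * (n.choose j : ℝ) *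
      ((a + (m:ℝ))^k * (B^m * B^(-(j:ℤ)) * V (a + (m:ℝ) - j))) with hg0
    set T : ℕ → ℝ := fun j => ∑' s : ℕ, (a + (j:ℝ) + s)^k * (B^s * V (a + s)) with hT0
    have hgsum : ∀ j ∈ Finset.range (n+1),
        HasSum (g j) ((-1:ℝ)^j * (n.choose j : ℝ) * T j) := by
      intro j _
      have h2 := ((usum j).hasSum).mul_left ((-1:ℝ)^j * (n.choose j : ℝ))
      have heq : ∀ s : ℕ, (-1:ℝ)^j * (n.choose j : ℝ) *
          ((a + (j:ℝ) + s)^k * (B^s * V (a + s))) = g j (s + j) := by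
        intro s
        simp only [hg0]
        have e1 : a + ((s + j : ℕ) : ℝ) = a + (j:ℝ) + s := by push_cast; ring
        have e2 : a + ((s + j : ℕ) : ℝ) - (j:ℝ) = a + (s:ℝ) := by push_cast; ring
        have e3 : B^(s+j) * B^(-(j:ℤ)) = B^s := by
          rw [zpow_neg, zpow_natCast, pow_add, mul_assoc,
            mul_inv_cancel₀ (pow_ne_zero j hB), mul_one]
        rw [e2, e1, e3]
      have h1 : HasSum (fun s => g j (s + j)) ((-1:ℝ)^j * (n.choose j : ℝ) * T j) := by
        rw [hT0]
        simp only
        rw [← tsum_mul_left]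
        rw [show (fun s => g j (s + j)) = fun s : ℕ => (-1:ℝ)^j * (n.choose j : ℝ) *
          ((a + (j:ℝ) + s)^k * (B^s * V (a + s))) from funext fun s => (heq s).symm]
        exact ((usum j).mul_left _).hasSum
      have h3 := (hasSum_nat_add_iff (f := g j) j).mp h1
      have h4 : ∑ i ∈ Finset.range j, g j i = 0 := by
        apply Finset.sum_eq_zero
        intro i hi
        simp only [hg0]
        rw [hzero j i (Finset.mem_range.mp hi)]
        ring
      rwa [h4, add_zero] at h3
    have htot := hasSum_sum hgsum
    have hT : ∑ j ∈ Finset.range (n+1), (-1:ℝ)^j * (n.choose j : ℝ) * T j = 0 := by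
      have hswap : ∀ j ∈ Finset.range (n+1), (-1:ℝ)^j * (n.choose j : ℝ) * T j
          = ∑' s : ℕ, (-1:ℝ)^j * (n.choose j : ℝ) *
              ((a + (j:ℝ) + s)^k * (B^s * V (a + s))) := by
        intro j _
        rw [hT0]
        simp only
        rw [← tsum_mul_left]
      rw [Finset.sum_congr rfl hswap,
        ← Summable.tsum_finsetSum (fun j _ => ((usum j).mul_left ((-1:ℝ)^j * (n.choose j : ℝ))))]
      have hinner : ∀ s : ℕ, ∑ j ∈ Finset.range (n+1), (-1:ℝ)^j * (n.choose j : ℝ) *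
          ((a + (j:ℝ) + s)^k * (B^s * V (a + s))) = 0 := by
        intro s
        have hdz := diffZero n k hk (a + (s:ℝ))
        calc ∑ j ∈ Finset.range (n+1), (-1:ℝ)^j * (n.choose j : ℝ) *
              ((a + (j:ℝ) + s)^k * (B^s * V (a + s)))
            = (∑ j ∈ Finset.range (n+1), (-1:ℝ)^j * (n.choose j : ℝ) *
                (a + (s:ℝ) + j)^k) * (B^s * V (a + s)) := by
              rw [Finset.sum_mul]
              apply Finset.sum_congr rfl
              intro j _
              rw [show a + (j:ℝ) + (s:ℝ) = a + (s:ℝ) + (j:ℝ) by ring]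
              ring
          _ = 0 := by rw [hdz, zero_mul]
      rw [tsum_congr hinner, tsum_zero]
    rw [hT] at htot
    have hdecomp : ∀ m : ℕ, P (a + (m:ℝ)) * (a + (m:ℝ))^k * B^m *
        (∏ k' : Fin r, (1 / Real.Gamma ((m:ℝ) + a - γ k' + 1)))
          = ∑ j ∈ Finset.range (n+1), g j m := by
      intro m
      rw [hVm m, hP, Finset.sum_mul, Finset.sum_mul, Finset.sum_mul]
      apply Finset.sum_congr rfl
      intro j _
      calc (-1:ℝ)^j * (n.choose j : ℝ) * B^(-(j:ℤ)) *
            (∏ k' : Fin r, ∏ i ∈ Finset.range j, (a + (m:ℝ) - γ k' - i)) *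
            (a + (m:ℝ))^k * B^m * V (a + m)
          = (-1:ℝ)^j * (n.choose j : ℝ) * ((a + (m:ℝ))^k * (B^m * B^(-(j:ℤ)) *
              ((∏ k' : Fin r, ∏ i ∈ Finset.range j, (a + (m:ℝ) - γ k' - i)) *
                V (a + m)))) := by ring
        _ = g j m := by rw [hkey m j]
    have hfun : (fun m : ℕ => P (a + (m:ℝ)) * (a + (m:ℝ))^k * B^m *
        (∏ k' : Fin r, (1 / Real.Gamma ((m:ℝ) + a - γ k' + 1))))
          = fun m => ∑ j ∈ Finset.range (n+1), g j m := funext hdecomp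
    rw [hfun]
    exact htot
end

section
/- Fix r ≥ 1, n ∈ ℕ, B ∈ ℝ with 0 < |B| < 1, and real numbers α_1, …, α_r and γ_1, …, γ_r such that: α_k ≠ −m for every k and every m ∈ ℕ; γ_j − γ_k is not an integer whenever j ≠ k; and γ_j − γ_k − α_j is not an integer whenever j ≠ k. Define P : ℝ → ℝ by P(x) = Σ_{j=0}^{n} (−1)^j C(n,j) B^(−j) · Π_{k=1}^{r} [ Π_{i=0}^{j−1} (x − γ_k − i) · Π_{i=0}^{n−j−1} (x − γ_k + α_k + i) ]. Then: (i) P is the evaluation of a real polynomial of degree exactly r·n; (ii) for every index l ∈ {1,…,r} and every natural number k < n, the series Σ_{m=0}^{∞} P(γ_l + m) · (γ_l + m)^k · B^m · Π_{k'=1}^{r} [ Γ(m + γ_l − γ_{k'} + α_{k'}) / Γ(m + γ_l − γ_{k'} + 1) ] converges and has sum 0. -/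
open Filter Finset Polynomial

private lemma myGammaShift (x : ℝ) (s : ℕ) (h : ∀ i : ℕ, i < s → x + i ≠ 0) :
    Real.Gamma (x + s) = (∏ i ∈ Finset.range s, (x + i)) * Real.Gamma x := by
  induction s with
  | zero => simp
  | succ s ih =>
    have hx : x + s ≠ 0 := h s (Nat.lt_succ_self s)
    have h1 : x + ((s+1 : ℕ) : ℝ) = (x + s) + 1 := by push_cast; ring
    rw [h1, Real.Gamma_add_one hx, Finset.prod_range_succ,
      ih (fun i hi => h i (hi.trans (Nat.lt_succ_self s)))]
    ring

private lemma myTendstoRatio (a b : ℝ) :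
    Tendsto (fun t : ℕ => ((t:ℝ) + a) / ((t:ℝ) + b)) atTop (nhds 1) := by
  have hb : Tendsto (fun t : ℕ => (t:ℝ) + b) atTop atTop :=
    tendsto_atTop_add_const_right atTop b tendsto_natCast_atTop_atTop
  have h0 : Tendsto (fun t : ℕ => ((t:ℝ) + b)⁻¹) atTop (nhds 0) :=
    hb.inv_tendsto_atTop
  have h1 : Tendsto (fun t : ℕ => 1 + (a - b) * ((t:ℝ) + b)⁻¹) atTop (nhds (1 + (a-b) * 0)) :=
    tendsto_const_nhds.add (tendsto_const_nhds.mul h0)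
  rw [mul_zero, add_zero] at h1
  refine h1.congr' ?_
  filter_upwards [hb.eventually_ne_atTop 0] with t ht
  field_simp
  ring

private lemma myFinDiff (N : ℕ) : ∀ (p : Polynomial ℝ), p.degree < (N : ℕ) → ∀ x : ℝ,
    ∑ j ∈ Finset.range (N+1), (-1:ℝ)^j * (N.choose j) * p.eval (x + j) = 0 := by
  induction N with
  | zero =>
    intro p hp x
    have hb : p.degree = ⊥ := Nat.WithBot.lt_zero_iff.mp (by exact_mod_cast hp)
    have : p = 0 := Polynomial.degree_eq_bot.mp hb
    simp [this]
  | succ N ih =>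
    intro p hp x
    set q : Polynomial ℝ := p.comp (X + C 1) - p with hqdef
    have h1 : (X + C (1:ℝ)).natDegree = 1 := Polynomial.natDegree_X_add_C 1
    have hcomp_lc : (p.comp (X + C 1)).leadingCoeff = p.leadingCoeff := by
      by_cases hp0 : p = 0
      · simp [hp0]
      · rw [Polynomial.leadingCoeff_comp (by rw [h1]; norm_num)]
        rw [Polynomial.leadingCoeff_X_add_C, one_pow, mul_one]
    have hq : q.degree < (N : ℕ) := by
      by_cases hp0 : p = 0
      · rw [hqdef, hp0]
        simp
      · have hcomp0 : p.comp (X + C 1) ≠ 0 := by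
          intro h
          rw [h] at hcomp_lc
          simp at hcomp_lc
          exact hp0 (Polynomial.leadingCoeff_eq_zero.mp hcomp_lc.symm)
        have hdeq : (p.comp (X + C 1)).degree = p.degree := by
          rw [Polynomial.degree_eq_natDegree hcomp0, Polynomial.degree_eq_natDegree hp0]
          norm_cast
          rw [Polynomial.natDegree_comp, h1, mul_one]
        have hlt : q.degree < p.degree := by
          have := Polynomial.degree_sub_lt hdeq hcomp0 hcomp_lc
          rwa [← hqdef, hdeq] at this
        have hple : p.degree ≤ (N : ℕ) := by
          rw [Polynomial.degree_eq_natDegree hp0] at hp ⊢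
          exact_mod_cast Nat.lt_succ_iff.mp (by exact_mod_cast hp)
        exact lt_of_lt_of_le hlt hple
    have hqev : ∀ y : ℝ, q.eval y = p.eval (y + 1) - p.eval y := by
      intro y
      simp [hqdef, Polynomial.eval_comp]
    set T : ℝ → ℝ := fun y => ∑ j ∈ Finset.range (N+1), (-1:ℝ)^j * (N.choose j) * p.eval (y + j)
      with hT
    have hU : ∑ i ∈ Finset.range (N+1), (-1:ℝ)^i * (N.choose (i+1)) * p.eval (x + ((i+1:ℕ):ℝ))
        = p.eval x - T x := by
      have hT' : ∑ j ∈ Finset.range (N+2), (-1:ℝ)^j * (N.choose j) * p.eval (x + j) = T x := by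
        rw [Finset.sum_range_succ]
        simp [hT, Nat.choose_succ_self]
      rw [Finset.sum_range_succ' (fun j => (-1:ℝ)^j * ((N.choose j):ℝ) * p.eval (x + j)) (N+1)]
        at hT'
      have hneg : ∑ k ∈ Finset.range (N+1),
            (-1:ℝ)^(k+1) * ((N.choose (k+1)):ℝ) * p.eval (x + ((k+1:ℕ):ℝ))
          = -∑ i ∈ Finset.range (N+1), (-1:ℝ)^i * (N.choose (i+1)) * p.eval (x + ((i+1:ℕ):ℝ)) := by
        rw [← Finset.sum_neg_distrib]
        exact Finset.sum_congr rfl fun i _ => by ring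
      rw [hneg] at hT'
      simp only [Nat.cast_zero, pow_zero, Nat.choose_zero_right, Nat.cast_one, add_zero,
        one_mul, mul_one] at hT'
      linarith [hT']
    have hreindex :
        ∑ j ∈ Finset.range (N+2), (-1:ℝ)^j * (((N+1).choose j):ℝ) * p.eval (x + j)
          = T x - T (x+1) := by
      rw [Finset.sum_range_succ' (fun j => (-1:ℝ)^j * (((N+1).choose j):ℝ) * p.eval (x + j)) (N+1)]
      have hsplit : ∑ i ∈ Finset.range (N+1),
            (-1:ℝ)^(i+1) * (((N+1).choose (i+1)):ℝ) * p.eval (x + ((i+1:ℕ):ℝ))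
          = ∑ i ∈ Finset.range (N+1),
            (-((-1:ℝ)^i * ((N.choose i):ℝ) * p.eval ((x+1) + i))
              - (-1:ℝ)^i * ((N.choose (i+1)):ℝ) * p.eval (x + ((i+1:ℕ):ℝ))) := by
        refine Finset.sum_congr rfl fun i _ => ?_
        rw [Nat.choose_succ_succ]
        push_cast
        rw [show x + ((i:ℝ) + 1) = (x+1) + i by ring]
        ring
      rw [hsplit, Finset.sum_sub_distrib, Finset.sum_neg_distrib, hU]
      simp only [Nat.cast_zero, pow_zero, Nat.choose_zero_right, Nat.cast_one, add_zero,
        one_mul, mul_one, hT]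
      ring
    have hfinal : T x - T (x+1)
        = -∑ j ∈ Finset.range (N+1), (-1:ℝ)^j * (N.choose j) * q.eval (x + j) := by
      rw [hT, ← Finset.sum_sub_distrib, ← Finset.sum_neg_distrib]
      refine Finset.sum_congr rfl fun j _ => ?_
      rw [hqev, show (x:ℝ) + j + 1 = (x+1) + j by ring]
      ring
    calc ∑ j ∈ Finset.range (N+1+1), (-1:ℝ)^j * (((N+1).choose j):ℝ) * p.eval (x + j)
        = T x - T (x+1) := hreindex
      _ = -∑ j ∈ Finset.range (N+1), (-1:ℝ)^j * (N.choose j) * q.eval (x + j) := hfinal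
      _ = 0 := by rw [ih q hq x, neg_zero]

private lemma myPowDiff (n k : ℕ) (hk : k < n) (x : ℝ) :
    ∑ j ∈ Finset.range (n+1), (-1:ℝ)^j * (n.choose j) * (x + j)^k = 0 := by
  have := myFinDiff n (X^k) (by rw [Polynomial.degree_X_pow]; exact_mod_cast hk) x
  simpa using this

/-- The paper's main Theorem specialized to a product of `r` Meixner weights on shifted
lattices `γ_k + ℤ₊`: the Rodrigues polynomial `P` has degree exactly `r·n` and satisfies
the multiple orthogonality relations with respect to the `r` discrete measures. -/
theorem stmt_6 (r : ℕ) (hr : 1 ≤ r) (n : ℕ) (B : ℝ) (hB0 : 0 < |B|) (hB1 : |B| < 1)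
    (α γ : Fin r → ℝ)
    (hα : ∀ k : Fin r, ∀ m : ℕ, α k ≠ -(m : ℝ))
    (hγ : ∀ j k : Fin r, j ≠ k → ∀ z : ℤ, γ j - γ k ≠ (z : ℝ))
    (hγα : ∀ j k : Fin r, j ≠ k → ∀ z : ℤ, γ j - γ k - α j ≠ (z : ℝ)) (P : ℝ → ℝ)
    (hP : ∀ x : ℝ, P x = ∑ j ∈ Finset.range (n + 1),
      (-1 : ℝ) ^ j * (n.choose j : ℝ) * B ^ (-(j : ℤ)) *
        ∏ k : Fin r,
          ((∏ i ∈ Finset.range j, (x - γ k - (i : ℝ))) *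
            ∏ i ∈ Finset.range (n - j), (x - γ k + α k + (i : ℝ)))) :
    (∃ p : Polynomial ℝ, p.degree = (r * n : ℕ) ∧ ∀ x : ℝ, P x = p.eval x) ∧
    (∀ l : Fin r, ∀ k : ℕ, k < n →
      HasSum (fun m : ℕ =>
        P (γ l + m) * (γ l + m) ^ k * B ^ m *
          ∏ k' : Fin r,
            (Real.Gamma ((m : ℝ) + γ l - γ k' + α k') /
              Real.Gamma ((m : ℝ) + γ l - γ k' + 1))) 0) := by
  constructor
  · have hBne : B ≠ 0 := by
      intro h; rw [h] at hB0; simp at hB0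
    set M : ℕ → Polynomial ℝ := fun j => ∏ k : Fin r,
        ((∏ i ∈ Finset.range j, (X - C (γ k + i))) *
          ∏ i ∈ Finset.range (n - j), (X - C (γ k - α k - i))) with hM
    have hfac : ∀ j (k : Fin r), ((∏ i ∈ Finset.range j, (X - C (γ k + (i:ℝ)))) *
        ∏ i ∈ Finset.range (n - j), (X - C (γ k - α k - i))).Monic := fun j k =>
      (monic_prod_of_monic _ _ fun i _ => monic_X_sub_C _).mul
        (monic_prod_of_monic _ _ fun i _ => monic_X_sub_C _)
    have hMmonic : ∀ j, (M j).Monic := fun j => monic_prod_of_monic _ _ fun k _ => hfac j k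
    have hMdeg : ∀ j ∈ Finset.range (n+1), (M j).natDegree = r * n := by
      intro j hj
      have hj' : j ≤ n := Nat.lt_succ_iff.mp (Finset.mem_range.mp hj)
      rw [hM]
      rw [Polynomial.natDegree_prod _ _ (fun k _ => (hfac j k).ne_zero)]
      have hkdeg : ∀ k : Fin r, ((∏ i ∈ Finset.range j, (X - C (γ k + (i:ℝ)))) *
          ∏ i ∈ Finset.range (n - j), (X - C (γ k - α k - i))).natDegree = n := by
        intro k
        rw [Polynomial.natDegree_mul (monic_prod_of_monic _ _
          fun i _ => monic_X_sub_C _).ne_zero (monic_prod_of_monic _ _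
          fun i _ => monic_X_sub_C _).ne_zero]
        rw [Polynomial.natDegree_prod _ _ (fun i _ => X_sub_C_ne_zero _),
          Polynomial.natDegree_prod _ _ (fun i _ => X_sub_C_ne_zero _)]
        rw [Finset.sum_congr rfl (fun i _ => natDegree_X_sub_C _),
          Finset.sum_congr rfl (fun i _ => natDegree_X_sub_C _)]
        simp only [Finset.sum_const, Finset.card_range, smul_eq_mul, mul_one]
        omega
      rw [Finset.sum_congr rfl (fun k _ => hkdeg k)]
      simp [Finset.sum_const, mul_comm]
    set c : ℕ → ℝ := fun j => (-1 : ℝ) ^ j * (n.choose j : ℝ) * B ^ (-(j : ℤ)) with hc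
    set p : Polynomial ℝ := ∑ j ∈ Finset.range (n+1), C (c j) * M j with hp
    have hcoeff : p.coeff (r * n) = (1 - B⁻¹)^n := by
      rw [hp, Polynomial.finset_sum_coeff]
      have : ∀ j ∈ Finset.range (n+1), (C (c j) * M j).coeff (r*n) = c j := by
        intro j hj
        rw [Polynomial.coeff_C_mul, ← hMdeg j hj, (hMmonic j).coeff_natDegree, mul_one]
      rw [Finset.sum_congr rfl this]
      have hb : ∀ j : ℕ, B ^ (-(j:ℤ)) = (B⁻¹)^j := by
        intro j
        rw [zpow_neg, zpow_natCast, inv_pow]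
      have : ∀ j ∈ Finset.range (n+1), c j = (-B⁻¹)^j * 1^(n-j) * (n.choose j) := by
        intro j hj
        simp only [hc, hb j]
        ring
      rw [Finset.sum_congr rfl this, ← add_pow]
      ring_nf
    have hcne : (1 - B⁻¹)^n ≠ 0 := by
      apply pow_ne_zero
      intro h
      have : B⁻¹ = 1 := (sub_eq_zero.mp h).symm
      have : B = 1 := by
        field_simp at this
        exact this.symm
      rw [this] at hB1; norm_num at hB1
    have hdegle : p.degree ≤ (r * n : ℕ) := by
      rw [hp]
      refine (Polynomial.degree_sum_le _ _).trans ?_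
      rw [Finset.sup_le_iff]
      intro j hj
      refine (Polynomial.degree_mul_le _ _).trans ?_
      have h1 : (M j).degree = (r * n : ℕ) := by
        rw [Polynomial.degree_eq_natDegree (hMmonic j).ne_zero, hMdeg j hj]
      rw [h1]
      calc (C (c j)).degree + ((r*n:ℕ) : WithBot ℕ) ≤ 0 + ((r*n:ℕ) : WithBot ℕ) := by
            exact add_le_add Polynomial.degree_C_le le_rfl
        _ = _ := by rw [zero_add]
    refine ⟨p, Polynomial.degree_eq_of_le_of_coeff_ne_zero hdegle (by rw [hcoeff]; exact hcne), ?_⟩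
    intro x
    rw [hP x, hp]
    rw [Polynomial.eval_finset_sum]
    refine Finset.sum_congr rfl fun j hj => ?_
    rw [Polynomial.eval_mul, Polynomial.eval_C, Polynomial.eval_prod, hc]
    congr 1
    refine Finset.prod_congr rfl fun k _ => ?_
    rw [Polynomial.eval_mul, Polynomial.eval_prod, Polynomial.eval_prod]
    congr 1
    · exact Finset.prod_congr rfl fun i _ => by
        rw [Polynomial.eval_sub, Polynomial.eval_X, Polynomial.eval_C]; ring
    · exact Finset.prod_congr rfl fun i _ => by
        rw [Polynomial.eval_sub, Polynomial.eval_X, Polynomial.eval_C]; ring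
  · have hBne : B ≠ 0 := fun h => by rw [h] at hB0; simp at hB0
    intro l k hk
    -- nonvanishing master lemmas
    have Hnum : ∀ (k' : Fin r) (z : ℤ), 0 ≤ z → (z:ℝ) + (γ l - γ k') + α k' ≠ 0 := by
      intro k' z hz h
      by_cases hkl : k' = l
      · subst hkl
        have hzz : ((z.toNat : ℕ) : ℝ) = (z:ℝ) := by
          exact_mod_cast congrArg (fun a : ℤ => (a : ℝ)) (Int.toNat_of_nonneg hz)
        exact hα k' z.toNat (by rw [hzz]; simp only [sub_self, add_zero] at h; linarith)
      · exact hγα k' l hkl z (by linarith)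
    have Hden : ∀ (k' : Fin r) (z : ℤ), 0 ≤ z → (z:ℝ) + (γ l - γ k') + 1 ≠ 0 := by
      intro k' z hz h
      by_cases hkl : k' = l
      · subst hkl
        have : (0:ℝ) ≤ (z:ℝ) := by exact_mod_cast hz
        simp only [sub_self, add_zero] at h
        linarith
      · exact hγ l k' (Ne.symm hkl) (-(z+1)) (by push_cast; linarith)
    -- the function G
    set G : ℤ → ℝ := fun t => B ^ t * ∏ k' : Fin r,
        Real.Gamma ((t:ℝ) + (γ l - γ k') + α k' + n) / Real.Gamma ((t:ℝ) + (γ l - γ k') + 1)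
      with hG
    have hGneg : ∀ t : ℤ, t < 0 → G t = 0 := by
      intro t ht
      have h0 : Real.Gamma ((t:ℝ) + (γ l - γ l) + 1) = 0 := by
        have h3 : (((-(t+1)).toNat : ℕ) : ℝ) = ((-(t+1) : ℤ) : ℝ) := by
          exact_mod_cast congrArg (fun a : ℤ => (a : ℝ))
            (Int.toNat_of_nonneg (by omega : (0:ℤ) ≤ -(t+1)))
        have h2 : (t:ℝ) + (γ l - γ l) + 1 = -(((-(t+1)).toNat : ℕ):ℝ) := by
          rw [h3]; push_cast; ring
        rw [h2, Real.Gamma_neg_nat_eq_zero]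
      simp only [hG]
      have : ∏ k' : Fin r,
          Real.Gamma ((t:ℝ) + (γ l - γ k') + α k' + n) / Real.Gamma ((t:ℝ) + (γ l - γ k') + 1)
          = 0 :=
        Finset.prod_eq_zero (Finset.mem_univ l) (by rw [h0, div_zero])
      rw [this, mul_zero]
    have hGammaNum : ∀ (k' : Fin r) (t : ℕ), Real.Gamma (((t:ℤ):ℝ) + (γ l - γ k') + α k' + n) ≠ 0 := by
      intro k' t
      refine Real.Gamma_ne_zero fun m => fun h => ?_
      refine Hnum k' ((t:ℤ) + n + m) (by positivity) ?_
      push_cast at h ⊢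
      linarith
    have hGammaDen : ∀ (k' : Fin r) (t : ℕ), Real.Gamma (((t:ℤ):ℝ) + (γ l - γ k') + 1) ≠ 0 := by
      intro k' t
      refine Real.Gamma_ne_zero fun m => fun h => ?_
      refine Hden k' ((t:ℤ) + m) (by positivity) ?_
      push_cast at h ⊢
      linarith
    have hGne : ∀ t : ℕ, G (t:ℤ) ≠ 0 := by
      intro t
      simp only [hG]
      refine mul_ne_zero (zpow_ne_zero _ hBne) (Finset.prod_ne_zero_iff.mpr fun k' _ => ?_)
      exact div_ne_zero (hGammaNum k' t) (hGammaDen k' t)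
    -- the ratio function
    set Rt : ℕ → ℝ := fun t => B * ∏ k' : Fin r,
        (((t:ℝ) + (γ l - γ k') + α k' + n) / ((t:ℝ) + (γ l - γ k') + 1)) with hRt
    have hGrec : ∀ t : ℕ, G ((t+1:ℕ):ℤ) = Rt t * G (t:ℤ) := by
      intro t
      have hcast : (((t+1:ℕ):ℤ):ℝ) = ((t:ℤ):ℝ) + 1 := by push_cast; ring
      have hnum : ∀ k' : Fin r, Real.Gamma ((((t+1:ℕ):ℤ):ℝ) + (γ l - γ k') + α k' + n)
          = (((t:ℤ):ℝ) + (γ l - γ k') + α k' + n)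
            * Real.Gamma (((t:ℤ):ℝ) + (γ l - γ k') + α k' + n) := by
        intro k'
        have harg : (((t+1:ℕ):ℤ):ℝ) + (γ l - γ k') + α k' + n
            = (((t:ℤ):ℝ) + (γ l - γ k') + α k' + n) + 1 := by rw [hcast]; ring
        rw [harg, Real.Gamma_add_one]
        intro h
        refine Hnum k' ((t:ℤ)+n) (by positivity) ?_
        push_cast at h ⊢
        linarith
      have hden : ∀ k' : Fin r, Real.Gamma ((((t+1:ℕ):ℤ):ℝ) + (γ l - γ k') + 1)
          = (((t:ℤ):ℝ) + (γ l - γ k') + 1) * Real.Gamma (((t:ℤ):ℝ) + (γ l - γ k') + 1) := by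
        intro k'
        have harg : (((t+1:ℕ):ℤ):ℝ) + (γ l - γ k') + 1
            = (((t:ℤ):ℝ) + (γ l - γ k') + 1) + 1 := by rw [hcast]; ring
        rw [harg, Real.Gamma_add_one]
        intro h
        refine Hden k' (t:ℤ) (by positivity) ?_
        push_cast at h ⊢
        linarith
      simp only [hG, hRt]
      have hprod : ∏ k' : Fin r, Real.Gamma ((((t+1:ℕ):ℤ):ℝ) + (γ l - γ k') + α k' + n)
            / Real.Gamma ((((t+1:ℕ):ℤ):ℝ) + (γ l - γ k') + 1)
          = ∏ k' : Fin r, ((((t:ℤ):ℝ) + (γ l - γ k') + α k' + n) / (((t:ℤ):ℝ) + (γ l - γ k') + 1))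
            * (Real.Gamma (((t:ℤ):ℝ) + (γ l - γ k') + α k' + n)
              / Real.Gamma (((t:ℤ):ℝ) + (γ l - γ k') + 1)) := by
        refine Finset.prod_congr rfl fun k' _ => ?_
        rw [hnum k', hden k', div_mul_div_comm]
      rw [hprod, Finset.prod_mul_distrib]
      have hB : B ^ (((t+1:ℕ):ℤ)) = B * B ^ ((t:ℕ):ℤ) := by
        have : ((t+1:ℕ):ℤ) = ((t:ℕ):ℤ) + 1 := by push_cast; ring
        rw [this, zpow_add_one₀ hBne]
        ring
      rw [hB]
      have hcast2 : ((t:ℤ):ℝ) = (t:ℝ) := by push_cast; ring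
      rw [hcast2]
      ring
    -- summand functions and ratio test
    set g : ℕ → ℕ → ℝ := fun j t => ((t:ℝ) + (γ l + j))^k * G (t:ℤ) with hg
    set Q : ℕ → ℕ → ℝ := fun j t =>
        (((t:ℝ) + (1 + (γ l + j))) / ((t:ℝ) + (γ l + j)))^k * Rt t with hQ
    have hQtend : ∀ j : ℕ, Tendsto (Q j) atTop (nhds ((1:ℝ)^k * (B * ∏ _k' : Fin r, (1:ℝ)))) := by
      intro j
      have h1 : Tendsto (fun t : ℕ => (((t:ℝ) + (1 + (γ l + j))) / ((t:ℝ) + (γ l + j)))^k)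
          atTop (nhds ((1:ℝ)^k)) := (myTendstoRatio _ _).pow k
      have h2 : ∀ k' : Fin r, Tendsto (fun t : ℕ =>
          ((t:ℝ) + (γ l - γ k') + α k' + n) / ((t:ℝ) + (γ l - γ k') + 1)) atTop (nhds 1) := by
        intro k'
        refine (myTendstoRatio ((γ l - γ k') + α k' + n) ((γ l - γ k') + 1)).congr fun t => ?_
        congr 1 <;> ring
      have h3 : Tendsto Rt atTop (nhds (B * ∏ _k' : Fin r, (1:ℝ))) := by
        simp only [hRt]
        exact tendsto_const_nhds.mul (tendsto_finset_prod _ fun k' _ => h2 k')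
      exact h1.mul h3
    have hlim : (1:ℝ)^k * (B * ∏ _k' : Fin r, (1:ℝ)) = B := by simp
    have hev : ∀ j : ℕ, ∀ᶠ t : ℕ in atTop, ((t:ℝ) + (γ l + j)) ≠ 0 := fun j =>
      (tendsto_atTop_add_const_right atTop (γ l + j) tendsto_natCast_atTop_atTop).eventually_ne_atTop 0
    have hgrec : ∀ j t : ℕ, ((t:ℝ) + (γ l + j)) ≠ 0 → g j (t+1) = Q j t * g j t := by
      intro j t hne
      simp only [hg, hQ]
      rw [hGrec t]
      rw [show (((t+1:ℕ)):ℝ) = (t:ℝ) + 1 by push_cast; ring]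
      rw [div_pow]
      have hb : ((t:ℝ) + (γ l + j)) ^ k ≠ 0 := pow_ne_zero _ hne
      field_simp
      ring
    have hratio : ∀ j : ℕ, Tendsto (fun t : ℕ => ‖g j (t+1)‖ / ‖g j t‖) atTop (nhds |B|) := by
      intro j
      have habs : Tendsto (fun t : ℕ => |Q j t|) atTop (nhds |B|) := by
        have := (continuous_abs.tendsto B).comp ((hlim ▸ hQtend j))
        exact this
      refine habs.congr' ?_
      filter_upwards [hev j] with t hne
      have hgz : g j t ≠ 0 := mul_ne_zero (pow_ne_zero _ hne) (hGne t)
      rw [hgrec j t hne, norm_mul, mul_div_assoc, div_self (norm_ne_zero_iff.mpr hgz), mul_one,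
        Real.norm_eq_abs]
    have hsummable : ∀ j : ℕ, Summable (g j) := by
      intro j
      refine summable_of_ratio_test_tendsto_lt_one hB1 ?_ (hratio j)
      filter_upwards [hev j] with t hne
      exact mul_ne_zero (pow_ne_zero _ hne) (hGne t)
    -- shifted summands
    set F : ℕ → ℕ → ℝ := fun j m => (γ l + (m:ℝ))^k * G ((m:ℤ) - (j:ℤ)) with hF
    have hFshift : ∀ j t : ℕ, F j (t + j) = g j t := by
      intro j t
      simp only [hF, hg]
      congr 2
      · push_cast; ring
      · push_cast; ring
    have hFsum : ∀ j : ℕ, HasSum (F j) (∑' t, g j t) := by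
      intro j
      have h1 : HasSum (fun t => F j (t + j)) (∑' t, g j t) := by
        rw [funext (hFshift j)]
        exact (hsummable j).hasSum
      have h2 := (hasSum_nat_add_iff j).mp h1
      have h3 : ∑ i ∈ Finset.range j, F j i = 0 := by
        refine Finset.sum_eq_zero fun i hi => ?_
        have hz : G ((i:ℤ) - j) = 0 := hGneg _ (by have := Finset.mem_range.mp hi; omega)
        simp [hF, hz]
      rwa [h3, add_zero] at h2
    -- the per-factor Gamma identity
    have hfac : ∀ (k' : Fin r) (j m : ℕ), j ≤ n → j ≤ m →
        ((∏ i ∈ Finset.range j, (γ l + (m:ℝ) - γ k' - i)) *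
          ∏ i ∈ Finset.range (n - j), (γ l + (m:ℝ) - γ k' + α k' + i)) *
          (Real.Gamma ((m:ℝ) + γ l - γ k' + α k') / Real.Gamma ((m:ℝ) + γ l - γ k' + 1))
        = Real.Gamma ((((m:ℤ) - j):ℝ) + (γ l - γ k') + α k' + n)
          / Real.Gamma ((((m:ℤ) - j):ℝ) + (γ l - γ k') + 1) := by
      intro k' j m hjn hjm
      set x : ℝ := (m:ℝ) + (γ l - γ k') with hx
      have hrise : Real.Gamma ((((m:ℤ) - j):ℝ) + (γ l - γ k') + α k' + n)
          = (∏ i ∈ Finset.range (n - j), (γ l + (m:ℝ) - γ k' + α k' + i))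
            * Real.Gamma ((m:ℝ) + γ l - γ k' + α k') := by
        have harg : (((m:ℤ) - j):ℝ) + (γ l - γ k') + α k' + n
            = (x + α k') + ((n - j : ℕ):ℝ) := by
          rw [hx, Nat.cast_sub hjn]; push_cast; ring
        rw [harg, myGammaShift (x + α k') (n - j) ?side]
        case side =>
          intro i hi h
          refine Hnum k' ((m:ℤ) + i) (by positivity) ?_
          rw [hx] at h; push_cast at h ⊢; linarith
        congr 1
        · refine Finset.prod_congr rfl fun i _ => by rw [hx]; ring
        · congr 1; rw [hx]; ring
      have hfall0 : ∀ i : ℕ, i < j → (x - i) ≠ 0 := by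
        intro i hi h
        refine Hden k' ((m:ℤ) - i - 1) (by omega) ?_
        rw [hx] at h; push_cast at h ⊢; linarith
      set y : ℝ := (((m:ℤ) - j):ℝ) + (γ l - γ k') + 1 with hy
      have hfall : Real.Gamma ((m:ℝ) + γ l - γ k' + 1)
          = (∏ i ∈ Finset.range j, (x - i)) * Real.Gamma y := by
        have harg : (m:ℝ) + γ l - γ k' + 1 = y + (j:ℕ) := by rw [hy]; push_cast; ring
        rw [harg, myGammaShift y j ?side2]
        case side2 =>
          intro i hi h
          refine Hden k' ((m:ℤ) - j + i) (by omega) ?_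
          rw [hy] at h; push_cast at h ⊢; linarith
        congr 1
        calc ∏ i ∈ Finset.range j, (y + i)
            = ∏ i ∈ Finset.range j, (y + ((j - 1 - i : ℕ):ℝ)) :=
              (Finset.prod_range_reflect (fun i => y + i) j).symm
          _ = ∏ i ∈ Finset.range j, (x - i) := by
              refine Finset.prod_congr rfl fun i hi => ?_
              have hij : i < j := Finset.mem_range.mp hi
              have hcast : ((j - 1 - i : ℕ):ℝ) = (j:ℝ) - 1 - i := by
                have h5 : (j - 1 - i : ℕ) = j - (1 + i) := by omega
                rw [h5, Nat.cast_sub (by omega)]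
                push_cast; ring
              rw [hy, hcast, hx]
              push_cast; ring
      have hF0 : (∏ i ∈ Finset.range j, (x - i)) ≠ 0 :=
        Finset.prod_ne_zero_iff.mpr fun i hi => hfall0 i (Finset.mem_range.mp hi)
      have hfall_goal : (∏ i ∈ Finset.range j, (γ l + (m:ℝ) - γ k' - i))
          = ∏ i ∈ Finset.range j, (x - i) :=
        Finset.prod_congr rfl fun i _ => by rw [hx]; ring
      rw [hrise, hfall, hfall_goal]
      have hstep : ((∏ i ∈ Finset.range j, (x - i)) *
            ∏ i ∈ Finset.range (n - j), (γ l + (m:ℝ) - γ k' + α k' + i)) *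
            (Real.Gamma ((m:ℝ) + γ l - γ k' + α k')
              / ((∏ i ∈ Finset.range j, (x - i)) * Real.Gamma y))
          = ((∏ i ∈ Finset.range j, (x - i)) *
              ((∏ i ∈ Finset.range (n - j), (γ l + (m:ℝ) - γ k' + α k' + i)) *
                Real.Gamma ((m:ℝ) + γ l - γ k' + α k')))
            / ((∏ i ∈ Finset.range j, (x - i)) * Real.Gamma y) := by
        ring
      rw [hstep, mul_div_mul_left _ _ hF0]
    -- the key Rodrigues identity
    have hkeyj : ∀ j : ℕ, j ≤ n → ∀ m : ℕ,
        B ^ (-(j:ℤ)) * B ^ m * ∏ k' : Fin r,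
          (((∏ i ∈ Finset.range j, (γ l + (m:ℝ) - γ k' - i)) *
            ∏ i ∈ Finset.range (n - j), (γ l + (m:ℝ) - γ k' + α k' + i)) *
            (Real.Gamma ((m:ℝ) + γ l - γ k' + α k') / Real.Gamma ((m:ℝ) + γ l - γ k' + 1)))
        = G ((m:ℤ) - j) := by
      intro j hjn m
      rcases Nat.lt_or_ge m j with hmj | hjm
      · have h1 : (∏ i ∈ Finset.range j, (γ l + (m:ℝ) - γ l - i)) = 0 :=
          Finset.prod_eq_zero (Finset.mem_range.mpr hmj) (by ring)
        have h2 : ∏ k' : Fin r,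
            (((∏ i ∈ Finset.range j, (γ l + (m:ℝ) - γ k' - i)) *
              ∏ i ∈ Finset.range (n - j), (γ l + (m:ℝ) - γ k' + α k' + i)) *
              (Real.Gamma ((m:ℝ) + γ l - γ k' + α k') / Real.Gamma ((m:ℝ) + γ l - γ k' + 1))) = 0 :=
          Finset.prod_eq_zero (Finset.mem_univ l) (by rw [h1]; ring)
        rw [h2, hGneg ((m:ℤ) - j) (by omega), mul_zero]
      · rw [Finset.prod_congr rfl (fun k' _ => hfac k' j m hjn hjm)]
        have hBB : B ^ (-(j:ℤ)) * B ^ m = B ^ ((m:ℤ) - j) := by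
          rw [← zpow_natCast B m, ← zpow_add₀ hBne]
          congr 1
          omega
        rw [hBB]
        simp only [hG]
        push_cast
        rfl
    -- rewrite the summand
    have hkey : ∀ m : ℕ,
        P (γ l + m) * (γ l + m) ^ k * B ^ m *
          ∏ k' : Fin r,
            (Real.Gamma ((m : ℝ) + γ l - γ k' + α k') /
              Real.Gamma ((m : ℝ) + γ l - γ k' + 1))
        = ∑ j ∈ Finset.range (n+1), ((-1:ℝ)^j * (n.choose j)) * F j m := by
      intro m
      rw [hP (γ l + m), Finset.sum_mul, Finset.sum_mul, Finset.sum_mul]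
      refine Finset.sum_congr rfl fun j hj => ?_
      have hjn : j ≤ n := Nat.lt_succ_iff.mp (Finset.mem_range.mp hj)
      have hW : (∏ k' : Fin r, ((∏ i ∈ Finset.range j, (γ l + (m:ℝ) - γ k' - i)) *
            ∏ i ∈ Finset.range (n - j), (γ l + (m:ℝ) - γ k' + α k' + i))) *
          (∏ k' : Fin r, (Real.Gamma ((m:ℝ) + γ l - γ k' + α k')
            / Real.Gamma ((m:ℝ) + γ l - γ k' + 1)))
          = ∏ k' : Fin r, (((∏ i ∈ Finset.range j, (γ l + (m:ℝ) - γ k' - i)) *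
              ∏ i ∈ Finset.range (n - j), (γ l + (m:ℝ) - γ k' + α k' + i)) *
              (Real.Gamma ((m:ℝ) + γ l - γ k' + α k')
                / Real.Gamma ((m:ℝ) + γ l - γ k' + 1))) :=
        (Finset.prod_mul_distrib).symm
      calc (-1:ℝ)^j * (n.choose j) * B ^ (-(j:ℤ)) *
            (∏ k' : Fin r, ((∏ i ∈ Finset.range j, (γ l + (m:ℝ) - γ k' - i)) *
              ∏ i ∈ Finset.range (n - j), (γ l + (m:ℝ) - γ k' + α k' + i)))
            * (γ l + m)^k * B^m *
            ∏ k' : Fin r, (Real.Gamma ((m:ℝ) + γ l - γ k' + α k')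
              / Real.Gamma ((m:ℝ) + γ l - γ k' + 1))
          = ((-1:ℝ)^j * (n.choose j)) * ((γ l + (m:ℝ))^k * (B ^ (-(j:ℤ)) * B^m *
              ((∏ k' : Fin r, ((∏ i ∈ Finset.range j, (γ l + (m:ℝ) - γ k' - i)) *
                ∏ i ∈ Finset.range (n - j), (γ l + (m:ℝ) - γ k' + α k' + i))) *
              (∏ k' : Fin r, (Real.Gamma ((m:ℝ) + γ l - γ k' + α k')
                / Real.Gamma ((m:ℝ) + γ l - γ k' + 1)))))) := by ring
        _ = ((-1:ℝ)^j * (n.choose j)) * ((γ l + (m:ℝ))^k * G ((m:ℤ) - j)) := by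
            rw [hW, hkeyj j hjn m]
        _ = ((-1:ℝ)^j * (n.choose j)) * F j m := by simp only [hF]
    -- assemble
    have hbig : HasSum (fun m : ℕ => ∑ j ∈ Finset.range (n+1), ((-1:ℝ)^j * (n.choose j)) * F j m)
        (∑ j ∈ Finset.range (n+1), ((-1:ℝ)^j * (n.choose j)) * (∑' t, g j t)) :=
      hasSum_sum fun j _ => (hFsum j).mul_left _
    have hzero : ∑ j ∈ Finset.range (n+1), ((-1:ℝ)^j * (n.choose j)) * (∑' t, g j t) = 0 := by
      have h1 : ∀ j ∈ Finset.range (n+1),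
          ((-1:ℝ)^j * (n.choose j)) * (∑' t, g j t) = ∑' t, ((-1:ℝ)^j * (n.choose j)) * g j t :=
        fun j _ => (tsum_mul_left).symm
      rw [Finset.sum_congr rfl h1, ← Summable.tsum_finsetSum (fun j _ => (hsummable j).mul_left _)]
      have h2 : ∀ t : ℕ, ∑ j ∈ Finset.range (n+1), ((-1:ℝ)^j * (n.choose j)) * g j t = 0 := by
        intro t
        have h3 : ∀ j ∈ Finset.range (n+1),
            ((-1:ℝ)^j * (n.choose j)) * g j t
              = ((-1:ℝ)^j * (n.choose j) * ((γ l + t) + j)^k) * G (t:ℤ) := by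
          intro j _
          simp only [hg]
          rw [show (t:ℝ) + (γ l + j) = (γ l + t) + j by ring]
          ring
        rw [Finset.sum_congr rfl (h3), ← Finset.sum_mul, myPowDiff n k hk (γ l + t), zero_mul]
      calc ∑' t : ℕ, ∑ j ∈ Finset.range (n+1), ((-1:ℝ)^j * (n.choose j)) * g j t
          = ∑' t : ℕ, (0:ℝ) := tsum_congr h2
        _ = 0 := tsum_zero
    have hfinal : HasSum (fun m : ℕ =>
        ∑ j ∈ Finset.range (n+1), ((-1:ℝ)^j * (n.choose j)) * F j m) 0 := hzero ▸ hbig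
    have hfe : (fun m : ℕ =>
        P (γ l + m) * (γ l + m) ^ k * B ^ m *
          ∏ k' : Fin r,
            (Real.Gamma ((m : ℝ) + γ l - γ k' + α k') /
              Real.Gamma ((m : ℝ) + γ l - γ k' + 1)))
        = fun m : ℕ => ∑ j ∈ Finset.range (n+1), ((-1:ℝ)^j * (n.choose j)) * F j m :=
      funext hkey
    rw [hfe]
    exact hfinal
end
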